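/- arXiv:2004.12951 — 9 statements merged into one kernel-verified Lean document; each statement's English description precedes it below -/
import Mathlib

section
/- Let f : ℝ^n → ℝ^n be a continuously differentiable bijection such that at every point x the derivative Df(x) is symmetric and positive definite with respect to the Euclidean inner product. Then there exists a twice continuously differentiable function V : ℝ^n → ℝ such that: (a) V is strictly convex, i.e. V(λx₁ + (1−λ)x₂) < λV(x₁) + (1−λ)V(x₂) for all λ ∈ (0,1) and all x₁ ≠ x₂; (b) the gradient of V is the inverse function of f, i.e. ∇V(y) = f⁻¹(y) for all y ∈ ℝ^n; (c) there exists a point y* ∈ ℝ^n with V(y*) = 0 and V(y) > 0 for all y ≠ y*. -/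
open scoped RealInnerProductSpace
open Function MeasureTheory Set Topology intervalIntegral

noncomputable section PfAux
variable {n : ℕ}
local notation "Ee" => EuclideanSpace ℝ (Fin n)

lemma pf_aux_equiv (A : Ee →L[ℝ] Ee)
    (hA : ∀ u, u ≠ 0 → 0 < ⟪A u, u⟫) :
    ∃ e : Ee ≃L[ℝ] Ee, (e : Ee →L[ℝ] Ee) = A := by
  have hinj : Function.Injective A := by
    intro u v huv
    by_contra h
    have h0 : u - v ≠ 0 := sub_ne_zero.2 h
    have hz : A (u - v) = 0 := by rw [map_sub, huv, sub_self]
    have := hA _ h0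
    rw [hz, inner_zero_left] at this
    exact lt_irrefl 0 this
  have hsurj : Function.Surjective A :=
    (LinearMap.injective_iff_surjective (f := (A : Ee →ₗ[ℝ] Ee))).1 hinj
  refine ⟨(LinearEquiv.ofBijective (A : Ee →ₗ[ℝ] Ee)
    ⟨hinj, hsurj⟩).toContinuousLinearEquiv, ?_⟩
  exact ContinuousLinearMap.ext fun v => rfl

lemma pf_inv_contDiffAt (f : Ee → Ee)
    (hf : ContDiff ℝ 1 f) (hbij : Function.Bijective f)
    (f' : Ee → Ee →L[ℝ] Ee)
    (hderiv : ∀ x, HasFDerivAt f (f' x) x)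
    (hpos : ∀ x u, u ≠ 0 → 0 < ⟪f' x u, u⟫) (y : Ee) :
    ContDiffAt ℝ 1 (Function.invFun f) y := by
  set g := Function.invFun f with hgdef
  have hgr : ∀ z, f (g z) = z := fun z => Function.rightInverse_invFun hbij.2 z
  obtain ⟨e, he⟩ := pf_aux_equiv (f' (g y)) (hpos _)
  have hfd : HasFDerivAt f (e : Ee →L[ℝ] Ee) (g y) := he ▸ hderiv (g y)
  have hcd : ContDiffAt ℝ 1 f (g y) := hf.contDiffAt
  have hloc : ContDiffAt ℝ 1 (hcd.localInverse hfd one_ne_zero) (f (g y)) :=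
    hcd.to_localInverse hfd one_ne_zero
  have hev : ∀ᶠ z in 𝓝 (f (g y)), f ((hcd.localInverse hfd one_ne_zero) z) = z :=
    (hcd.hasStrictFDerivAt' hfd one_ne_zero).eventually_right_inverse
  have heq : (hcd.localInverse hfd one_ne_zero) =ᶠ[𝓝 (f (g y))] g :=
    hev.mono fun z hz => hbij.1 (by rw [hgr z, hz])
  rw [hgr y] at hloc heq
  exact hloc.congr_of_eventuallyEq heq.symm

lemma pf_poincare (f : Ee → Ee) (hf : ContDiff ℝ 1 f)
    (f' : Ee → Ee →L[ℝ] Ee)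
    (hderiv : ∀ x, HasFDerivAt f (f' x) x)
    (hsymm : ∀ x u v, ⟪f' x u, v⟫ = ⟪u, f' x v⟫) (x₀ : Ee) :
    HasFDerivAt (fun x => ∫ t in (0:ℝ)..1, ⟪f (t • x), x⟫) ((innerSL ℝ) (f x₀)) x₀ := by
  have hf'c : Continuous f' := by
    have hfe : f' = fderiv ℝ f := funext fun x => ((hderiv x).fderiv).symm
    rw [hfe]; exact hf.continuous_fderiv one_ne_zero
  set F' : Ee → ℝ → (Ee →L[ℝ] ℝ) :=
    fun x t => t • ((innerSL ℝ x).comp (f' (t • x))) + (innerSL ℝ (f (t • x))) with hF'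
  have hF'cont : Continuous (fun p : Ee × ℝ => F' p.1 p.2) := by
    apply Continuous.add
    · exact continuous_snd.smul
        (Continuous.clm_comp ((innerSL ℝ).continuous.comp continuous_fst)
          (hf'c.comp (continuous_snd.smul continuous_fst)))
    · exact (innerSL ℝ).continuous.comp (hf.continuous.comp (continuous_snd.smul continuous_fst))
  have hcF'x₀ : Continuous (fun t : ℝ => F' x₀ t) := by
    exact hF'cont.comp (continuous_const.prodMk continuous_id)
  have hcFx : ∀ x : Ee, Continuous (fun t : ℝ => (⟪f (t • x), x⟫ : ℝ)) := fun x => by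
    exact (hf.continuous.comp (continuous_id.smul continuous_const)).inner continuous_const
  obtain ⟨C, hC⟩ : ∃ C, ∀ p ∈ (Metric.closedBall x₀ 1) ×ˢ (Icc (0:ℝ) 1),
      ‖F' p.1 p.2‖ ≤ C :=
    ((isCompact_closedBall x₀ 1).prod isCompact_Icc).exists_bound_of_continuousOn
      hF'cont.continuousOn
  have hmain : HasFDerivAt (fun x => ∫ t in (0:ℝ)..1, (⟪f (t • x), x⟫ : ℝ))
      (∫ t in (0:ℝ)..1, F' x₀ t) x₀ := by
    apply intervalIntegral.hasFDerivAt_integral_of_dominated_of_fderiv_le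
      (F' := fun x t => F' x t) (bound := fun _ => C) (s := Metric.ball x₀ 1) (Metric.ball_mem_nhds x₀ one_pos)
    · exact Filter.Eventually.of_forall fun x => (hcFx x).aestronglyMeasurable
    · exact (hcFx x₀).intervalIntegrable 0 1
    · exact hcF'x₀.aestronglyMeasurable
    · refine Filter.Eventually.of_forall fun t ht x hx => ?_
      refine hC (x, t) ⟨Metric.ball_subset_closedBall hx, ?_⟩
      rw [uIoc_of_le (zero_le_one)] at ht
      exact Ioc_subset_Icc_self ht
    · exact intervalIntegrable_const
    · refine Filter.Eventually.of_forall fun t ht x hx => ?_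
      have hline : HasFDerivAt (fun x : Ee => t • x) (t • ContinuousLinearMap.id ℝ Ee) x :=
        (hasFDerivAt_id x).const_smul t
      have h1 : HasFDerivAt (fun x => f (t • x))
          ((f' (t • x)).comp (t • ContinuousLinearMap.id ℝ Ee)) x := (hderiv (t • x)).comp x hline
      have h2 := h1.inner ℝ (hasFDerivAt_id x)
      refine h2.congr_fderiv ?_
      ext v
      simp only [hF', ContinuousLinearMap.add_apply, ContinuousLinearMap.coe_smul',
        Pi.smul_apply, ContinuousLinearMap.coe_comp', Function.comp_apply, innerSL_apply_apply,
        fderivInnerCLM_apply, ContinuousLinearMap.prod_apply, ContinuousLinearMap.coe_id',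
        id_eq, real_inner_smul_left, smul_eq_mul]
      rw [(f' (t • x)).map_smul, real_inner_smul_left, real_inner_comm ((f' (t • x)) v) x,
        real_inner_comm x ((f' (t • x)) v)]
      ring
  have hint : IntervalIntegrable (F' x₀) volume 0 1 := hcF'x₀.intervalIntegrable 0 1
  have hval : (∫ t in (0:ℝ)..1, F' x₀ t) = (innerSL ℝ) (f x₀) := by
    ext v
    rw [ContinuousLinearMap.intervalIntegral_apply hint]
    have hu : ∀ t ∈ uIcc (0:ℝ) 1, HasDerivAt (fun t : ℝ => t * ⟪f (t • x₀), v⟫)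
        ((F' x₀ t) v) t := by
      intro t _
      have hline : HasDerivAt (fun t : ℝ => t • x₀) x₀ t := by
        simpa using (hasDerivAt_id t).smul_const x₀
      have h1 : HasDerivAt (fun t : ℝ => f (t • x₀)) (f' (t • x₀) x₀) t :=
        (hderiv (t • x₀)).comp_hasDerivAt t hline
      have h2 : HasDerivAt (fun t : ℝ => (⟪f (t • x₀), v⟫ : ℝ)) (⟪f' (t • x₀) x₀, v⟫) t := by
        simpa using h1.inner ℝ (hasDerivAt_const t v)
      have h3 := (hasDerivAt_id t).mul h2
      refine h3.congr_deriv ?_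
      have hs : (⟪x₀, f' (t • x₀) v⟫ : ℝ) = ⟪f' (t • x₀) x₀, v⟫ := (hsymm (t • x₀) x₀ v).symm
      simp only [hF', ContinuousLinearMap.add_apply, ContinuousLinearMap.coe_smul',
        Pi.smul_apply, ContinuousLinearMap.coe_comp', Function.comp_apply, innerSL_apply_apply,
        real_inner_smul_left, smul_eq_mul, id_eq]
      rw [hs]
      ring
    have hi2 : IntervalIntegrable (fun t => (F' x₀ t) v) volume 0 1 := by
      refine Continuous.intervalIntegrable ?_ 0 1
      exact (ContinuousLinearMap.apply ℝ ℝ v).continuous.comp hcF'x₀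
    have := intervalIntegral.integral_eq_sub_of_hasDerivAt hu hi2
    simpa using this
  rw [← hval]
  exact hmain

end PfAux

/-- For a continuously differentiable bijection `f` of ℝⁿ with everywhere
symmetric positive definite derivative there is a twice continuously differentiable,
strictly convex function `V` whose gradient is `f⁻¹` and which vanishes at exactly one
point and is positive elsewhere. -/
theorem exists_strictly_convex_potential_of_cd_bijection {n : ℕ}
    (f : EuclideanSpace ℝ (Fin n) → EuclideanSpace ℝ (Fin n))
    (hf : ContDiff ℝ 1 f) (hbij : Function.Bijective f)
    (f' : EuclideanSpace ℝ (Fin n) →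
      EuclideanSpace ℝ (Fin n) →L[ℝ] EuclideanSpace ℝ (Fin n))
    (hderiv : ∀ x, HasFDerivAt f (f' x) x)
    (hsymm : ∀ x u v, ⟪f' x u, v⟫ = ⟪u, f' x v⟫)
    (hpos : ∀ x u, u ≠ 0 → 0 < ⟪f' x u, u⟫) :
    ∃ V : EuclideanSpace ℝ (Fin n) → ℝ,
      ContDiff ℝ 2 V ∧
      (∀ lam : ℝ, lam ∈ Set.Ioo (0 : ℝ) 1 →
        ∀ x₁ x₂ : EuclideanSpace ℝ (Fin n), x₁ ≠ x₂ →
          V (lam • x₁ + (1 - lam) • x₂) < lam * V x₁ + (1 - lam) * V x₂) ∧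
      (∀ y, gradient V y = Function.invFun f y) ∧
      (∃ ystar, V ystar = 0 ∧ ∀ y, y ≠ ystar → 0 < V y) := by
  classical
  set g : EuclideanSpace ℝ (Fin n) → EuclideanSpace ℝ (Fin n) := Function.invFun f with hgdef
  have hgr : ∀ z, f (g z) = z := fun z => Function.rightInverse_invFun hbij.2 z
  have hgl : ∀ x, g (f x) = x := fun x => Function.leftInverse_invFun hbij.1 x
  have hgC : ContDiff ℝ 1 g := contDiff_iff_contDiffAt.2 fun y =>
    pf_inv_contDiffAt f hf hbij f' hderiv hpos y
  have hgd : ∀ y, HasFDerivAt g (fderiv ℝ g y) y := fun y =>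
    (hgC.differentiable one_ne_zero y).hasFDerivAt
  set W : EuclideanSpace ℝ (Fin n) → ℝ := fun x => ∫ t in (0:ℝ)..1, ⟪f (t • x), x⟫ with hWdef
  have hW : ∀ x, HasFDerivAt W ((innerSL ℝ) (f x)) x := fun x =>
    pf_poincare f hf f' hderiv hsymm x
  set V : EuclideanSpace ℝ (Fin n) → ℝ := fun y => (⟪y, g y⟫ - W (g y)) - (⟪f 0, g (f 0)⟫ - W (g (f 0))) with hVdef
  -- derivative of V
  have hVd : ∀ y, HasFDerivAt V ((innerSL ℝ) (g y)) y := by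
    intro y
    have h1 := (hasFDerivAt_id y).inner ℝ (hgd y)
    have h2 : HasFDerivAt (fun y => W (g y)) (((innerSL ℝ) (f (g y))).comp (fderiv ℝ g y)) y :=
      (hW (g y)).comp y (hgd y)
    have h3 := (h1.sub h2).sub_const (⟪f 0, g (f 0)⟫ - W (g (f 0)))
    refine h3.congr_fderiv ?_
    ext v
    simp only [ContinuousLinearMap.coe_sub', Pi.sub_apply, ContinuousLinearMap.coe_comp',
      Function.comp_apply, fderivInnerCLM_apply, ContinuousLinearMap.prod_apply,
      ContinuousLinearMap.coe_id', id_eq, innerSL_apply_apply, hgr y]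
    rw [real_inner_comm v (g y)]
    ring
  have hVcont : Continuous V := by
    have := fun y => (hVd y).differentiableAt
    exact (Differentiable.continuous fun y => this y)
  -- monotonicity of f
  have hfmono : ∀ a b : EuclideanSpace ℝ (Fin n), a ≠ b → 0 < ⟪f a - f b, a - b⟫ := by
    intro a b hab
    have hd : a - b ≠ 0 := sub_ne_zero.2 hab
    have hq : ∀ t : ℝ, HasDerivAt (fun t : ℝ => (⟪f (b + t • (a - b)), a - b⟫ : ℝ))
        (⟪f' (b + t • (a - b)) (a - b), a - b⟫) t := by
      intro t
      have hl : HasDerivAt (fun t : ℝ => b + t • (a - b)) (a - b) t := by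
        simpa using ((hasDerivAt_id t).smul_const (a - b)).const_add b
      have h1 := (hderiv _).comp_hasDerivAt t hl
      simpa using h1.inner ℝ (hasDerivAt_const t (a - b))
    have hmono : StrictMono (fun t : ℝ => (⟪f (b + t • (a - b)), a - b⟫ : ℝ)) :=
      strictMono_of_deriv_pos fun t => by
        rw [(hq t).deriv]; exact hpos _ _ hd
    have h01 : (⟪f b, a - b⟫ : ℝ) < ⟪f a, a - b⟫ := by
      have := hmono zero_lt_one
      simpa using this
    rw [inner_sub_left]; linarith
  -- monotonicity of g
  have hgmono : ∀ u v : EuclideanSpace ℝ (Fin n), u ≠ v → 0 < ⟪g u - g v, u - v⟫ := by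
    intro u v huv
    have hne : g u ≠ g v := fun h => huv (by rw [← hgr u, h, hgr v])
    have := hfmono (g u) (g v) hne
    rw [hgr u, hgr v] at this
    rwa [real_inner_comm]
  -- derivative of V along lines
  have hlineV : ∀ (p d : EuclideanSpace ℝ (Fin n)) (t : ℝ),
      HasDerivAt (fun t : ℝ => V (p + t • d)) (⟪g (p + t • d), d⟫) t := by
    intro p d t
    have hl : HasDerivAt (fun t : ℝ => p + t • d) d t := by
      simpa using ((hasDerivAt_id t).smul_const d).const_add p
    have := (hVd (p + t • d)).comp_hasDerivAt t hl
    simpa [Function.comp_def] using this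
  -- strict monotonicity of directional derivative
  have hdermono : ∀ (p d : EuclideanSpace ℝ (Fin n)), d ≠ 0 →
      StrictMono (fun t : ℝ => (⟪g (p + t • d), d⟫ : ℝ)) := by
    intro p d hd s t hst
    have hne : p + t • d ≠ p + s • d := by
      intro h
      have h2 : t • d = s • d := by
        have := add_left_cancel h
        exact this
      have h3 : (t - s) • d = 0 := by rw [sub_smul, h2, sub_self]
      rcases smul_eq_zero.1 h3 with h4 | h4
      · exact (sub_ne_zero.2 (ne_of_gt hst)) h4
      · exact hd h4
    have h2 := hgmono _ _ hne
    have hyd : (p + t • d) - (p + s • d) = (t - s) • d := by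
      rw [sub_smul]; abel
    rw [hyd, real_inner_smul_right, inner_sub_left] at h2
    have hts : 0 < t - s := sub_pos.2 hst
    nlinarith
  -- strict convexity along lines
  have hVconv : ∀ (p d : EuclideanSpace ℝ (Fin n)), d ≠ 0 →
      StrictConvexOn ℝ univ (fun t : ℝ => V (p + t • d)) := by
    intro p d hd
    apply StrictMono.strictConvexOn_univ_of_deriv
    · exact hVcont.comp (continuous_const.add (continuous_id.smul continuous_const))
    · have hde : deriv (fun t : ℝ => V (p + t • d)) = fun t => ⟪g (p + t • d), d⟫ :=
        funext fun t => (hlineV p d t).deriv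
      rw [hde]
      exact hdermono p d hd
  -- the inner-product CLM for smoothness
  obtain ⟨T, hT⟩ : ∃ T : EuclideanSpace ℝ (Fin n) →L[ℝ] (EuclideanSpace ℝ (Fin n) →L[ℝ] ℝ), ∀ x, T x = innerSL ℝ x := by
    refine ⟨LinearMap.toContinuousLinearMap
      { toFun := fun x => innerSL ℝ x
        map_add' := fun x y => by ext v; simp [inner_add_left]
        map_smul' := fun c x => by ext v; simp [real_inner_smul_left] }, fun x => ?_⟩
    ext v
    simp
  refine ⟨V, ?_, ?_, ?_, ?_⟩
  · -- ContDiff 2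
    rw [show (2 : WithTop ℕ∞) = 1 + 1 from rfl, contDiff_succ_iff_fderiv]
    refine ⟨fun y => (hVd y).differentiableAt, ?_, ?_⟩
    · intro h; exact absurd h (by norm_num)
    · have hfd : fderiv ℝ V = fun y => T (g y) := funext fun y => by
        rw [(hVd y).fderiv, hT]
      rw [hfd]
      exact T.contDiff.comp hgC
  · -- strict convexity
    intro lam hlam x₁ x₂ hne
    have hd : x₁ - x₂ ≠ 0 := sub_ne_zero.2 hne
    have hc := (hVconv x₂ (x₁ - x₂) hd).2 (mem_univ (1:ℝ)) (mem_univ (0:ℝ)) one_ne_zero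
      hlam.1 (sub_pos.2 hlam.2) (by ring)
    simp only [smul_eq_mul, mul_one, mul_zero, add_zero, one_smul, zero_smul] at hc
    have e3 : x₂ + lam • (x₁ - x₂) = lam • x₁ + (1 - lam) • x₂ := by
      rw [smul_sub, sub_smul, one_smul]; abel
    have e1 : x₂ + (x₁ - x₂) = x₁ := by abel
    rw [e3, e1] at hc
    exact hc
  · -- gradient
    intro y
    have : HasGradientAt V (g y) y := by
      rw [hasGradientAt_iff_hasFDerivAt]
      exact (hVd y).congr_fderiv (by ext v; simp [innerSL_apply_apply, InnerProductSpace.toDual_apply_apply])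
    exact this.gradient
  · -- positivity
    refine ⟨f 0, by simp [hVdef], ?_⟩
    intro y hy
    have hd : y - f 0 ≠ 0 := sub_ne_zero.2 hy
    have hg0 : g (f 0) = 0 := hgl 0
    have hψmono : StrictMonoOn (fun t : ℝ => V (f 0 + t • (y - f 0))) (Icc 0 1) := by
      apply strictMonoOn_of_deriv_pos (convex_Icc 0 1)
      · exact (hVcont.comp (continuous_const.add (continuous_id.smul continuous_const))).continuousOn
      · intro t ht
        rw [interior_Icc] at ht
        rw [(hlineV (f 0) (y - f 0) t).deriv]
        have h0 : (⟪g (f 0 + (0:ℝ) • (y - f 0)), y - f 0⟫ : ℝ) = 0 := by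
          simp [hg0]
        have := hdermono (f 0) (y - f 0) hd ht.1
        simp only at this
        rw [h0] at this
        exact this
    have h01 := hψmono (left_mem_Icc.2 zero_le_one) (right_mem_Icc.2 zero_le_one) zero_lt_one
    have e0 : f 0 + (0:ℝ) • (y - f 0) = f 0 := by simp
    have e1 : f 0 + (1:ℝ) • (y - f 0) = y := by rw [one_smul]; abel
    simp only [e0, e1] at h01
    have hV0 : V (f 0) = 0 := by simp [hVdef]
    rw [hV0] at h01
    exact h01
end

section
/- Let f : ℝ^n → ℝ^n be a continuously differentiable map such that at every point x the derivative Df(x) is symmetric and positive definite with respect to the Euclidean inner product. For r ≥ 0 set m(r) := inf over x with ‖x‖ = r and unit vectors v of ⟪Df(x)v, v⟫ (the minimum over the sphere of radius r of the smallest eigenvalue of Df(x)). If ∫₀^∞ m(r) dr = ∞, then f is bijective. -/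
open scoped RealInnerProductSpace
open MeasureTheory

/-- lintegral over `Ioi 0` is at most the sup of lintegrals over `Ioc 0 k`,
valid for arbitrary (possibly non-measurable) integrands. -/
lemma hl_lintegral_Ioi_le_iSup (g : ℝ → ENNReal) :
    ∫⁻ r in Set.Ioi (0:ℝ), g r ≤ ⨆ k : ℕ, ∫⁻ r in Set.Ioc (0:ℝ) (k:ℝ), g r := by
  rw [MeasureTheory.lintegral]
  refine iSup₂_le fun φ hφ => ?_
  have h1 : φ.lintegral (volume.restrict (Set.Ioi (0:ℝ)))
      = ∫⁻ r in Set.Ioi (0:ℝ), φ r := (φ.lintegral_eq_lintegral _).symm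
  rw [h1]
  have hind : ∀ r : ℝ, (Set.Ioi (0:ℝ)).indicator φ r
      = ⨆ k : ℕ, (Set.Ioc (0:ℝ) (k:ℝ)).indicator φ r := by
    intro r
    by_cases hr : 0 < r
    · rw [Set.indicator_of_mem (Set.mem_Ioi.mpr hr)]
      refine le_antisymm (le_iSup_of_le ⌈r⌉₊ ?_) (iSup_le fun k => ?_)
      · rw [Set.indicator_of_mem (Set.mem_Ioc.mpr ⟨hr, Nat.le_ceil r⟩)]
      · classical
        by_cases h : r ∈ Set.Ioc (0:ℝ) (k:ℝ)
        · rw [Set.indicator_of_mem h]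
        · rw [Set.indicator_of_notMem h]; exact zero_le
    · rw [Set.indicator_of_notMem (by simpa using hr)]
      refine le_antisymm zero_le (iSup_le fun k => ?_)
      rw [Set.indicator_of_notMem (fun h => hr h.1)]
  calc ∫⁻ r in Set.Ioi (0:ℝ), φ r
      = ∫⁻ r, (Set.Ioi (0:ℝ)).indicator φ r := (lintegral_indicator measurableSet_Ioi _).symm
    _ = ∫⁻ r, ⨆ k : ℕ, (Set.Ioc (0:ℝ) (k:ℝ)).indicator φ r := by simp_rw [hind]
    _ = ⨆ k : ℕ, ∫⁻ r, (Set.Ioc (0:ℝ) (k:ℝ)).indicator φ r := by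
        refine lintegral_iSup (fun k => φ.measurable.indicator measurableSet_Ioc) ?_
        intro a b hab r
        classical
        dsimp only
        by_cases h : r ∈ Set.Ioc (0:ℝ) (a:ℝ)
        · rw [Set.indicator_of_mem h,
            Set.indicator_of_mem (Set.mem_Ioc.mpr ⟨h.1, h.2.trans (by exact_mod_cast hab)⟩)]
        · rw [Set.indicator_of_notMem h]; exact zero_le
    _ = ⨆ k : ℕ, ∫⁻ r in Set.Ioc (0:ℝ) (k:ℝ), φ r := by
        simp_rw [lintegral_indicator measurableSet_Ioc]
    _ ≤ ⨆ k : ℕ, ∫⁻ r in Set.Ioc (0:ℝ) (k:ℝ), g r := by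
        exact iSup_mono fun k => lintegral_mono hφ

/-- Hadamard–Levy type criterion.  If `f : ℝⁿ → ℝⁿ` is continuously
differentiable with everywhere symmetric positive definite derivative, and the function
`m(r)`, the infimum over the sphere of radius `r` of the smallest eigenvalue of `Df(x)`
(i.e. the infimum of `⟪Df(x)v, v⟫` over `‖x‖ = r` and unit vectors `v`), satisfies
`∫₀^∞ m(r) dr = ∞`, then `f` is bijective. -/
theorem bijective_of_hadamard_levy {n : ℕ}
    (f : EuclideanSpace ℝ (Fin n) → EuclideanSpace ℝ (Fin n))
    (hf : ContDiff ℝ 1 f)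
    (f' : EuclideanSpace ℝ (Fin n) →
      EuclideanSpace ℝ (Fin n) →L[ℝ] EuclideanSpace ℝ (Fin n))
    (hderiv : ∀ x, HasFDerivAt f (f' x) x)
    (hsymm : ∀ x u v, ⟪f' x u, v⟫ = ⟪u, f' x v⟫)
    (hpos : ∀ x u, u ≠ 0 → 0 < ⟪f' x u, u⟫)
    (m : ℝ → ℝ)
    (hm : ∀ r : ℝ, m r = sInf {c : ℝ | ∃ x v : EuclideanSpace ℝ (Fin n),
      ‖x‖ = r ∧ ‖v‖ = 1 ∧ c = ⟪f' x v, v⟫})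
    (hint : ∫⁻ r in Set.Ioi (0 : ℝ), ENNReal.ofReal (m r) = ⊤) :
    Function.Bijective f := by
  -- derivative along a line
  have hline : ∀ (y d : EuclideanSpace ℝ (Fin n)) (t : ℝ),
      HasDerivAt (fun s : ℝ => ⟪f (y + s • d), d⟫) ⟪f' (y + t • d) d, d⟫ t := by
    intro y d t
    have hγ : HasDerivAt (fun s : ℝ => y + s • d) d t := by
      simpa using ((hasDerivAt_id t).smul_const d).const_add y
    have hc := (hderiv (y + t • d)).comp_hasDerivAt t hγ
    simpa [Function.comp] using hc.inner ℝ (hasDerivAt_const t d)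
  -- key monotonicity estimate
  have key : ∀ x y : EuclideanSpace ℝ (Fin n), x ≠ y → 0 < ⟪f x - f y, x - y⟫ := by
    intro x y hxy
    set d : EuclideanSpace ℝ (Fin n) := x - y with hd
    have hdne : d ≠ 0 := sub_ne_zero.mpr hxy
    set φ : ℝ → ℝ := fun s => ⟪f (y + s • d), d⟫ with hφ
    have hder : ∀ t : ℝ, HasDerivAt φ ⟪f' (y + t • d) d, d⟫ t := hline y d
    have hmono : StrictMonoOn φ (Set.Icc (0:ℝ) 1) := by
      refine strictMonoOn_of_deriv_pos (convex_Icc 0 1)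
        (fun t _ => ((hder t).differentiableAt.continuousAt).continuousWithinAt) ?_
      intro t _
      rw [(hder t).deriv]
      exact hpos _ d hdne
    have h01 : φ 0 < φ 1 := hmono (Set.left_mem_Icc.mpr zero_le_one)
      (Set.right_mem_Icc.mpr zero_le_one) zero_lt_one
    have h0 : φ 0 = ⟪f y, d⟫ := by simp [hφ]
    have h1 : φ 1 = ⟪f x, d⟫ := by simp [hφ, hd]
    have : ⟪f y, d⟫ < ⟪f x, d⟫ := by rwa [h0, h1] at h01
    rw [inner_sub_left]
    linarith
  have hinj : Function.Injective f := by
    intro x y hxy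
    by_contra hne
    have := key x y hne
    rw [hxy, sub_self, inner_zero_left] at this
    exact lt_irrefl 0 this
  -- growth estimate
  have hgrow : ∀ x : EuclideanSpace ℝ (Fin n),
      ∫⁻ t in Set.Ioc (0:ℝ) ‖x‖, ENNReal.ofReal (m t)
        ≤ ENNReal.ofReal (‖f x‖ + ‖f 0‖) := by
    intro x
    by_cases hx : x = 0
    · simp [hx, le_trans zero_le zero_le]
    · have hxn : (0:ℝ) < ‖x‖ := norm_pos_iff.mpr hx
      set u : EuclideanSpace ℝ (Fin n) := ‖x‖⁻¹ • x with hu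
      have hun : ‖u‖ = 1 := by
        rw [hu, norm_smul, norm_inv, norm_norm, inv_mul_cancel₀ (ne_of_gt hxn)]
      have hune : u ≠ 0 := fun h => by simp [h] at hun
      set h : ℝ → ℝ := fun t => ⟪f' (t • u) u, u⟫ with hh
      -- continuity of h
      have hf'cont : Continuous f' := by
        have : (fun x => fderiv ℝ f x) = f' := funext fun x => (hderiv x).fderiv
        simpa [this] using (hf.continuous_fderiv one_ne_zero)
      have hhc : Continuous h := by
        have h1 : Continuous fun t : ℝ => f' (t • u) u :=
          ((hf'cont.comp (continuous_id.smul continuous_const)).clm_apply continuous_const)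
        exact h1.inner continuous_const
      -- FTC
      have hd : ∀ t ∈ Set.uIcc (0:ℝ) ‖x‖,
          HasDerivAt (fun s : ℝ => ⟪f (s • u), u⟫) (h t) t := by
        intro t _
        simpa using hline 0 u t
      have hint' : IntervalIntegrable h volume 0 ‖x‖ :=
        hhc.intervalIntegrable _ _
      have hftc : ∫ t in (0:ℝ)..‖x‖, h t
          = ⟪f (‖x‖ • u), u⟫ - ⟪f ((0:ℝ) • u), u⟫ :=
        intervalIntegral.integral_eq_sub_of_hasDerivAt hd hint'
      have hxu : ‖x‖ • u = x := by
        rw [hu, smul_smul, mul_inv_cancel₀ (ne_of_gt hxn), one_smul]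
      have hftc2 : ∫ t in Set.Ioc (0:ℝ) ‖x‖, h t = ⟪f x - f 0, u⟫ := by
        rw [← intervalIntegral.integral_of_le hxn.le, hftc, hxu]
        simp [inner_sub_left]
      -- comparing with m
      have hml : ∀ t : ℝ, m t ≤ h t := by
        intro t
        rcases lt_or_ge t 0 with ht | ht
        · have hempty : {c : ℝ | ∃ x v : EuclideanSpace ℝ (Fin n),
              ‖x‖ = t ∧ ‖v‖ = 1 ∧ c = ⟪f' x v, v⟫} = ∅ := by
            ext c
            simp only [Set.mem_setOf_eq, Set.mem_empty_iff_false, iff_false]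
            rintro ⟨x, v, hxt, -, -⟩
            exact absurd (hxt ▸ norm_nonneg x) (not_le.mpr ht)
          rw [hm t, hempty, Real.sInf_empty]
          exact le_of_lt (hpos _ u hune)
        · have hbdd : BddBelow {c : ℝ | ∃ x v : EuclideanSpace ℝ (Fin n),
              ‖x‖ = t ∧ ‖v‖ = 1 ∧ c = ⟪f' x v, v⟫} := by
            refine ⟨0, fun c hc => ?_⟩
            obtain ⟨x, v, -, hv, rfl⟩ := hc
            exact le_of_lt (hpos x v (fun h => by simp [h] at hv))
          have hmem : h t ∈ {c : ℝ | ∃ x v : EuclideanSpace ℝ (Fin n),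
              ‖x‖ = t ∧ ‖v‖ = 1 ∧ c = ⟪f' x v, v⟫} := by
            refine ⟨t • u, u, ?_, hun, rfl⟩
            rw [norm_smul, hun, mul_one, Real.norm_eq_abs, abs_of_nonneg ht]
          rw [hm t]
          exact csInf_le hbdd hmem
      calc ∫⁻ t in Set.Ioc (0:ℝ) ‖x‖, ENNReal.ofReal (m t)
          ≤ ∫⁻ t in Set.Ioc (0:ℝ) ‖x‖, ENNReal.ofReal (h t) :=
            lintegral_mono fun t => ENNReal.ofReal_le_ofReal (hml t)
        _ = ENNReal.ofReal (∫ t in Set.Ioc (0:ℝ) ‖x‖, h t) := by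
            refine (ofReal_integral_eq_lintegral_ofReal ?_ ?_).symm
            · exact hhc.integrableOn_Ioc
            · exact Filter.Eventually.of_forall fun t => le_of_lt (hpos _ u hune)
        _ = ENNReal.ofReal ⟪f x - f 0, u⟫ := by rw [hftc2]
        _ ≤ ENNReal.ofReal (‖f x‖ + ‖f 0‖) := by
            refine ENNReal.ofReal_le_ofReal ?_
            calc ⟪f x - f 0, u⟫ ≤ ‖f x - f 0‖ * ‖u‖ := real_inner_le_norm _ _
              _ = ‖f x - f 0‖ := by rw [hun, mul_one]
              _ ≤ ‖f x‖ + ‖f 0‖ := norm_sub_le _ _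
  -- the sup of the truncated integrals is infinite
  have hsup : (⨆ k : ℕ, ∫⁻ t in Set.Ioc (0:ℝ) (k:ℝ), ENNReal.ofReal (m t)) = ⊤ :=
    top_le_iff.mp (hint ▸ hl_lintegral_Ioi_le_iSup fun r => ENNReal.ofReal (m r))
  -- properness
  have htop : Filter.Tendsto f (Filter.cocompact (EuclideanSpace ℝ (Fin n))) (Filter.cocompact (EuclideanSpace ℝ (Fin n))) := by
    rw [← Metric.cobounded_eq_cocompact]
    refine (Metric.tendsto_dist_right_atTop_iff (0:EuclideanSpace ℝ (Fin n))).mp ?_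
    simp only [dist_zero_right]
    rw [Filter.tendsto_atTop]
    intro C
    set D : ℝ := max C 0 with hD
    have hD0 : 0 ≤ D + ‖f 0‖ := add_nonneg (le_max_right C 0) (norm_nonneg _)
    obtain ⟨k, hk⟩ : ∃ k : ℕ, ENNReal.ofReal (D + ‖f 0‖)
        < ∫⁻ t in Set.Ioc (0:ℝ) (k:ℝ), ENNReal.ofReal (m t) := by
      by_contra hcon
      push_neg at hcon
      have : (⨆ k : ℕ, ∫⁻ t in Set.Ioc (0:ℝ) (k:ℝ), ENNReal.ofReal (m t))
          ≤ ENNReal.ofReal (D + ‖f 0‖) := iSup_le hcon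
      rw [hsup] at this
      exact ENNReal.ofReal_ne_top (top_le_iff.mp this)
    have hev : ∀ᶠ x : EuclideanSpace ℝ (Fin n) in Bornology.cobounded (EuclideanSpace ℝ (Fin n)), (k:ℝ) ≤ ‖x‖ := by
      have := Metric.tendsto_dist_right_cobounded_atTop (0:EuclideanSpace ℝ (Fin n))
      simp only [dist_zero_right] at this
      exact this.eventually_ge_atTop (k:ℝ)
    refine hev.mono fun x hx => ?_
    have hsub : Set.Ioc (0:ℝ) (k:ℝ) ⊆ Set.Ioc (0:ℝ) ‖x‖ :=
      Set.Ioc_subset_Ioc le_rfl hx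
    have hchain : ENNReal.ofReal (D + ‖f 0‖) < ENNReal.ofReal (‖f x‖ + ‖f 0‖) :=
      lt_of_lt_of_le (lt_of_lt_of_le hk (lintegral_mono_set hsub)) (hgrow x)
    have := (ENNReal.ofReal_lt_ofReal_iff_of_nonneg hD0).mp hchain
    have : D < ‖f x‖ := by linarith
    exact le_trans (le_max_left C 0) this.le
  have hproper : IsProperMap f := isProperMap_iff_tendsto_cocompact.mpr
    ⟨hf.continuous, htop⟩
  -- openness
  have hopen : IsOpenMap f := by
    have hderinj : ∀ x : EuclideanSpace ℝ (Fin n), Function.Injective (f' x) := by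
      intro x u v huv
      by_contra hne
      have hd : u - v ≠ 0 := sub_ne_zero.mpr hne
      have := hpos x (u - v) hd
      rw [map_sub, huv, sub_self, inner_zero_left] at this
      exact lt_irrefl 0 this
    set F : EuclideanSpace ℝ (Fin n) → (EuclideanSpace ℝ (Fin n) ≃L[ℝ] EuclideanSpace ℝ (Fin n)) := fun x =>
      LinearEquiv.toContinuousLinearEquiv
        (LinearEquiv.ofBijective (f' x : EuclideanSpace ℝ (Fin n) →ₗ[ℝ] EuclideanSpace ℝ (Fin n))
          ⟨hderinj x, LinearMap.injective_iff_surjective.mp (hderinj x)⟩) with hF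
    have hFc : ∀ x : EuclideanSpace ℝ (Fin n), (F x : EuclideanSpace ℝ (Fin n) →L[ℝ] EuclideanSpace ℝ (Fin n)) = f' x := by
      intro x
      ext v
      rfl
    refine isOpenMap_of_hasStrictFDerivAt_equiv (f' := F) fun x => ?_
    rw [hFc x]
    have := (hf.contDiffAt (x := x)).hasStrictFDerivAt one_ne_zero
    rwa [(hderiv x).fderiv] at this
  -- surjectivity
  have hclopen : IsClopen (Set.range f) :=
    ⟨hproper.isClosedMap.isClosed_range, hopen.isOpen_range⟩
  have hsurj : Function.Surjective f := by
    rw [← Set.range_eq_univ]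
    refine (isClopen_iff.mp hclopen).resolve_left ?_
    exact Set.Nonempty.ne_empty ⟨f 0, Set.mem_range_self 0⟩
  exact ⟨hinj, hsurj⟩
end

section
/- Consider a port-Hamiltonian differential-algebraic equation: let E be a real k×n matrix, J a real k×k matrix, B a real k×m matrix, z, r : ℝ^k → ℝ^k continuous functions (z composed with the state), V ⊆ ℝ^k a linear subspace, and H : ℝ^n → ℝ continuously differentiable. Assume: (i) J is skew-symmetric on V, i.e. vᵀJw = −wᵀJv for all v, w ∈ V; (ii) r is accretive on V, i.e. vᵀr(v) ≥ 0 for all v ∈ V; (iii) ∇H(x) = Eᵀ z(x) for every x with z(x) ∈ V. Let u : [t₀,t₁] → ℝ^m be continuous and let x : [t₀,t₁] → ℝ^n be differentiable with z∘x continuous, satisfying d/dt (E x(t)) = J z(x(t)) − r(z(x(t))) + B u(t) and z(x(t)) ∈ V for all t ∈ [t₀,t₁], and set y(t) := Bᵀ z(x(t)). Then H(x(t₁)) − H(x(t₀)) ≤ ∫_{t₀}^{t₁} y(t)ᵀ u(t) dt; moreover H(x(t₁)) − H(x(t₀)) = −∫_{t₀}^{t₁} z(x(t))ᵀ r(z(x(t)))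 dt + ∫_{t₀}^{t₁} y(t)ᵀ u(t) dt. -/
open Matrix MeasureTheory


private lemma contOn_dot {p : ℕ} {s : Set ℝ} {f g : ℝ → Fin p → ℝ}
    (hf : ContinuousOn f s) (hg : ContinuousOn g s) :
    ContinuousOn (fun t => f t ⬝ᵥ g t) s := by
  unfold dotProduct
  exact continuousOn_finset_sum _ fun i _ =>
    ((continuous_apply i).comp_continuousOn hf).mul ((continuous_apply i).comp_continuousOn hg)

/-- Energy balance for a port-Hamiltonian DAE
`d/dt (E x) = J z(x) − r(z(x)) + B u`, `y = Bᵀ z(x)`: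
`H(x(t₁)) − H(x(t₀)) ≤ ∫ yᵀu`, and in fact
`H(x(t₁)) − H(x(t₀)) = −∫ z(x)ᵀ r(z(x)) + ∫ yᵀu`. -/
theorem phdae_energy_balance {k n m : ℕ}
    (E : Matrix (Fin k) (Fin n) ℝ) (J : Matrix (Fin k) (Fin k) ℝ)
    (B : Matrix (Fin k) (Fin m) ℝ)
    (z : (Fin n → ℝ) → (Fin k → ℝ)) (r : (Fin k → ℝ) → (Fin k → ℝ))
    (hz : Continuous z) (hr : Continuous r)
    (V : Submodule ℝ (Fin k → ℝ)) (H : (Fin n → ℝ) → ℝ)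
    (hJ : ∀ v ∈ V, ∀ w ∈ V, v ⬝ᵥ J.mulVec w = -(w ⬝ᵥ J.mulVec v))
    (hacc : ∀ v ∈ V, 0 ≤ v ⬝ᵥ r v)
    (hH : ContDiff ℝ 1 H)
    (hgrad : ∀ x, z x ∈ V → ∀ w, fderiv ℝ H x w = E.transpose.mulVec (z x) ⬝ᵥ w)
    (t₀ t₁ : ℝ) (ht : t₀ ≤ t₁)
    (u : ℝ → Fin m → ℝ) (hu : ContinuousOn u (Set.Icc t₀ t₁))
    (x : ℝ → Fin n → ℝ) (x' : ℝ → Fin n → ℝ)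
    (hx : ∀ t ∈ Set.Icc t₀ t₁, HasDerivAt x (x' t) t)
    (hzx : ContinuousOn (fun t => z (x t)) (Set.Icc t₀ t₁))
    (hode : ∀ t ∈ Set.Icc t₀ t₁,
      E.mulVec (x' t) = J.mulVec (z (x t)) - r (z (x t)) + B.mulVec (u t))
    (hmem : ∀ t ∈ Set.Icc t₀ t₁, z (x t) ∈ V)
    (y : ℝ → Fin m → ℝ)
    (hy : ∀ t, y t = B.transpose.mulVec (z (x t))) :
    H (x t₁) - H (x t₀) ≤ (∫ t in t₀..t₁, y t ⬝ᵥ u t) ∧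
    H (x t₁) - H (x t₀) =
      -(∫ t in t₀..t₁, z (x t) ⬝ᵥ r (z (x t))) + ∫ t in t₀..t₁, y t ⬝ᵥ u t := by

  have hzxc : ContinuousOn (fun t => z (x t) ⬝ᵥ r (z (x t))) (Set.Icc t₀ t₁) := by
    exact contOn_dot hzx (hr.comp_continuousOn hzx)
  have hyuc : ContinuousOn (fun t => y t ⬝ᵥ u t) (Set.Icc t₀ t₁) := by
    have hc : ContinuousOn (fun t => B.transpose.mulVec (z (x t))) (Set.Icc t₀ t₁) := by
      have := (LinearMap.continuous_of_finiteDimensional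
        (B.transpose.mulVecLin)).comp_continuousOn hzx
      simpa [Function.comp_def, Matrix.vecMulLinear_apply, Matrix.mulVec_transpose] using this
    simpa [hy] using contOn_dot hc hu
  have hint1 : IntervalIntegrable (fun t => z (x t) ⬝ᵥ r (z (x t))) volume t₀ t₁ :=
    hzxc.intervalIntegrable_of_Icc ht
  have hint2 : IntervalIntegrable (fun t => y t ⬝ᵥ u t) volume t₀ t₁ :=
    hyuc.intervalIntegrable_of_Icc ht
  have hderiv : ∀ t ∈ Set.Icc t₀ t₁, HasDerivAt (fun s => H (x s))
      (-(z (x t) ⬝ᵥ r (z (x t))) + y t ⬝ᵥ u t) t := by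
    intro t ht'
    have h1 : HasDerivAt (fun s => H (x s)) (fderiv ℝ H (x t) (x' t)) t :=
      (hH.differentiable one_ne_zero (x t)).hasFDerivAt.comp_hasDerivAt t (hx t ht')
    convert h1 using 1
    rw [hgrad (x t) (hmem t ht') (x' t)]
    have h2 : E.transpose.mulVec (z (x t)) ⬝ᵥ x' t = z (x t) ⬝ᵥ E.mulVec (x' t) := by
      rw [Matrix.mulVec_transpose, ← Matrix.dotProduct_mulVec]
    rw [h2, hode t ht']
    have hJz : z (x t) ⬝ᵥ J.mulVec (z (x t)) = 0 := by
      have := hJ _ (hmem t ht') _ (hmem t ht')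
      linarith
    have hBu : z (x t) ⬝ᵥ B.mulVec (u t) = y t ⬝ᵥ u t := by
      rw [hy, Matrix.mulVec_transpose, ← Matrix.dotProduct_mulVec]
    rw [dotProduct_add, dotProduct_sub, hJz, hBu]
    ring
  have hfund : (∫ t in t₀..t₁, (-(z (x t) ⬝ᵥ r (z (x t))) + y t ⬝ᵥ u t)) =
      H (x t₁) - H (x t₀) :=
    intervalIntegral.integral_eq_sub_of_hasDerivAt
      (by rw [Set.uIcc_of_le ht]; exact hderiv) (hint1.neg.add hint2)
  have hsplit : (∫ t in t₀..t₁, (-(z (x t) ⬝ᵥ r (z (x t))) + y t ⬝ᵥ u t)) =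
      -(∫ t in t₀..t₁, z (x t) ⬝ᵥ r (z (x t))) + ∫ t in t₀..t₁, y t ⬝ᵥ u t := by
    simpa [intervalIntegral.integral_neg] using intervalIntegral.integral_add hint1.neg hint2
  have heq : H (x t₁) - H (x t₀) =
      -(∫ t in t₀..t₁, z (x t) ⬝ᵥ r (z (x t))) + ∫ t in t₀..t₁, y t ⬝ᵥ u t := by
    rw [← hfund, hsplit]
  refine ⟨?_, heq⟩
  have hpos : 0 ≤ ∫ t in t₀..t₁, z (x t) ⬝ᵥ r (z (x t)) := by
    apply intervalIntegral.integral_nonneg ht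
    intro s hs
    exact hacc _ (hmem s hs)
  linarith [heq]
end

section
/- (Energy balance for circuit model 1.) Let A_C ∈ ℝ^{n×n_C}, A_R ∈ ℝ^{n×n_R}, A_L ∈ ℝ^{n×n_L}, A_V ∈ ℝ^{n×n_V}, A_I ∈ ℝ^{n×n_I} be real matrices. Let q : ℝ^{n_C} → ℝ^{n_C} and φ : ℝ^{n_L} → ℝ^{n_L} be bijections, let V_C, V_L be differentiable functions with ∇V_C = q⁻¹ and ∇V_L = φ⁻¹, and let g : ℝ^{n_R} → ℝ^{n_R} be continuous with ⟪g(u_R), u_R⟫ ≥ 0 for all u_R. Let i_s : [t₀,t₁] → ℝ^{n_I} and v_s : [t₀,t₁] → ℝ^{n_V} be continuous, and let q_C, φ_L, e, j_V be differentiable functions on [t₀,t₁] (with values in ℝ^{n_C}, ℝ^{n_L}, ℝ^n, ℝ^{n_V}) satisfying for all t: A_C q̇_C(t) + A_R g(A_Rᵀ e(t)) + A_L φ⁻¹(φ_L(t)) + A_V j_V(t) + A_I i_s(t) = 0; φ̇_L(t) = A_Lᵀ e(t); A_Vᵀ e(t) = v_s(t); and A_Cᵀ e(t) = q⁻¹(q_C(t)).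 Then with H(t) := V_C(q_C(t)) + V_L(φ_L(t)) one has H(t₁) − H(t₀) ≤ ∫_{t₀}^{t₁} ( −i_s(t)ᵀ A_Iᵀ e(t) − v_s(t)ᵀ j_V(t) ) dt. -/
open Matrix MeasureTheory

lemma cont_mulVec {m k : ℕ} (A : Matrix (Fin m) (Fin k) ℝ) :
    Continuous (A.mulVec) := by
  unfold Matrix.mulVec dotProduct
  exact continuous_pi fun i => continuous_finset_sum _ fun j _ =>
    continuous_const.mul (continuous_apply j)

lemma cont_dot {k : ℕ} :
    Continuous fun p : (Fin k → ℝ) × (Fin k → ℝ) => p.1 ⬝ᵥ p.2 := by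
  unfold dotProduct
  exact continuous_finset_sum _ fun i _ =>
    (((continuous_apply i).comp continuous_fst).mul ((continuous_apply i).comp continuous_snd))

lemma dot_mv {m k : ℕ} (A : Matrix (Fin m) (Fin k) ℝ) (v : Fin m → ℝ) (w : Fin k → ℝ) :
    v ⬝ᵥ (A *ᵥ w) = (Aᵀ *ᵥ v) ⬝ᵥ w := by
  rw [Matrix.dotProduct_mulVec, Matrix.mulVec_transpose]

/-- Energy balance for circuit model 1 (charge/flux-oriented MNA):
along any solution of the circuit equations, the Hamiltonian
`H = V_C(q_C) + V_L(φ_L)` satisfies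
`H(t₁) − H(t₀) ≤ ∫ (−i_sᵀ A_Iᵀ e − v_sᵀ j_V)`. -/
theorem circuit_model1_energy_balance {n nC nR nL nV nI : ℕ}
    (AC : Matrix (Fin n) (Fin nC) ℝ) (AR : Matrix (Fin n) (Fin nR) ℝ)
    (AL : Matrix (Fin n) (Fin nL) ℝ) (AV : Matrix (Fin n) (Fin nV) ℝ)
    (AI : Matrix (Fin n) (Fin nI) ℝ)
    (q : (Fin nC → ℝ) → (Fin nC → ℝ)) (φ : (Fin nL → ℝ) → (Fin nL → ℝ))
    (hq : Function.Bijective q) (hφ : Function.Bijective φ)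
    (VC : (Fin nC → ℝ) → ℝ) (VL : (Fin nL → ℝ) → ℝ)
    (hVC : Differentiable ℝ VC) (hVL : Differentiable ℝ VL)
    (hVCgrad : ∀ qc w, fderiv ℝ VC qc w = Function.invFun q qc ⬝ᵥ w)
    (hVLgrad : ∀ φl w, fderiv ℝ VL φl w = Function.invFun φ φl ⬝ᵥ w)
    (g : (Fin nR → ℝ) → (Fin nR → ℝ)) (hg : Continuous g)
    (hgacc : ∀ uR, 0 ≤ g uR ⬝ᵥ uR)
    (t₀ t₁ : ℝ) (ht : t₀ ≤ t₁)
    (is : ℝ → Fin nI → ℝ) (vs : ℝ → Fin nV → ℝ)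
    (his : ContinuousOn is (Set.Icc t₀ t₁)) (hvs : ContinuousOn vs (Set.Icc t₀ t₁))
    (qC : ℝ → Fin nC → ℝ) (φL : ℝ → Fin nL → ℝ)
    (e : ℝ → Fin n → ℝ) (jV : ℝ → Fin nV → ℝ)
    (qC' : ℝ → Fin nC → ℝ) (φL' : ℝ → Fin nL → ℝ)
    (hqC : ∀ t ∈ Set.Icc t₀ t₁, HasDerivAt qC (qC' t) t)
    (hφL : ∀ t ∈ Set.Icc t₀ t₁, HasDerivAt φL (φL' t) t)
    (he : ∀ t ∈ Set.Icc t₀ t₁, DifferentiableAt ℝ e t)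
    (hjV : ∀ t ∈ Set.Icc t₀ t₁, DifferentiableAt ℝ jV t)
    (hKCL : ∀ t ∈ Set.Icc t₀ t₁,
      AC.mulVec (qC' t) + AR.mulVec (g (AR.transpose.mulVec (e t))) +
        AL.mulVec (Function.invFun φ (φL t)) + AV.mulVec (jV t) +
        AI.mulVec (is t) = 0)
    (hflux : ∀ t ∈ Set.Icc t₀ t₁, φL' t = AL.transpose.mulVec (e t))
    (hvolt : ∀ t ∈ Set.Icc t₀ t₁, AV.transpose.mulVec (e t) = vs t)
    (hcharge : ∀ t ∈ Set.Icc t₀ t₁,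
      AC.transpose.mulVec (e t) = Function.invFun q (qC t)) :
    (VC (qC t₁) + VL (φL t₁)) - (VC (qC t₀) + VL (φL t₀)) ≤
      ∫ t in t₀..t₁,
        (-(is t ⬝ᵥ AI.transpose.mulVec (e t)) - vs t ⬝ᵥ jV t) := by

  have hIcc : Set.uIcc t₀ t₁ = Set.Icc t₀ t₁ := Set.uIcc_of_le ht
  set h' : ℝ → ℝ := fun t =>
    -(g (ARᵀ *ᵥ e t) ⬝ᵥ (ARᵀ *ᵥ e t)) +
      (-(is t ⬝ᵥ AIᵀ *ᵥ e t) - vs t ⬝ᵥ jV t) with hh'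
  -- derivative of the Hamiltonian
  have key : ∀ t ∈ Set.Icc t₀ t₁,
      HasDerivAt (fun t => VC (qC t) + VL (φL t)) (h' t) t := by
    intro t ht'
    have h1 : HasDerivAt (fun t => VC (qC t))
        (Function.invFun q (qC t) ⬝ᵥ qC' t) t := by
      have := ((hVC (qC t)).hasFDerivAt).comp_hasDerivAt t (hqC t ht')
      simpa [hVCgrad, Function.comp_def] using this
    have h2 : HasDerivAt (fun t => VL (φL t))
        (Function.invFun φ (φL t) ⬝ᵥ φL' t) t := by
      have := ((hVL (φL t)).hasFDerivAt).comp_hasDerivAt t (hφL t ht')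
      simpa [hVLgrad, Function.comp_def] using this
    have hsum := h1.add h2
    have h0 : e t ⬝ᵥ (AC *ᵥ qC' t) + e t ⬝ᵥ (AR *ᵥ g (ARᵀ *ᵥ e t)) +
        e t ⬝ᵥ (AL *ᵥ Function.invFun φ (φL t)) + e t ⬝ᵥ (AV *ᵥ jV t) +
        e t ⬝ᵥ (AI *ᵥ is t) = 0 := by
      have hK := hKCL t ht'
      have : e t ⬝ᵥ (AC *ᵥ qC' t + AR *ᵥ g (ARᵀ *ᵥ e t) +
          AL *ᵥ Function.invFun φ (φL t) + AV *ᵥ jV t + AI *ᵥ is t) = 0 := by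
        rw [hK]; simp
      simpa [dotProduct_add] using this
    have halg : h' t =
        Function.invFun q (qC t) ⬝ᵥ qC' t + Function.invFun φ (φL t) ⬝ᵥ φL' t := by
      rw [hflux t ht', ← hcharge t ht']
      have e1 : (ACᵀ *ᵥ e t) ⬝ᵥ qC' t = e t ⬝ᵥ (AC *ᵥ qC' t) := (dot_mv AC (e t) (qC' t)).symm
      have e2 : Function.invFun φ (φL t) ⬝ᵥ (ALᵀ *ᵥ e t) =
          e t ⬝ᵥ (AL *ᵥ Function.invFun φ (φL t)) := by
        rw [dotProduct_comm, ← dot_mv]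
      have e3 : e t ⬝ᵥ (AR *ᵥ g (ARᵀ *ᵥ e t)) = g (ARᵀ *ᵥ e t) ⬝ᵥ (ARᵀ *ᵥ e t) := by
        rw [dot_mv, dotProduct_comm]
      have e4 : e t ⬝ᵥ (AV *ᵥ jV t) = vs t ⬝ᵥ jV t := by
        rw [dot_mv, hvolt t ht']
      have e5 : e t ⬝ᵥ (AI *ᵥ is t) = is t ⬝ᵥ (AIᵀ *ᵥ e t) := by
        rw [dot_mv, dotProduct_comm]
      rw [e1, e2, hh']
      simp only
      rw [← e3, ← e4, ← e5]
      linarith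
    exact halg ▸ hsum
  -- continuity of the pieces
  have hec : ContinuousOn e (Set.Icc t₀ t₁) :=
    fun t ht' => (he t ht').continuousAt.continuousWithinAt
  have hjc : ContinuousOn jV (Set.Icc t₀ t₁) :=
    fun t ht' => (hjV t ht').continuousAt.continuousWithinAt
  have hARe : ContinuousOn (fun t => ARᵀ *ᵥ e t) (Set.Icc t₀ t₁) :=
    (cont_mulVec ARᵀ).comp_continuousOn hec
  have hAIe : ContinuousOn (fun t => AIᵀ *ᵥ e t) (Set.Icc t₀ t₁) :=
    (cont_mulVec AIᵀ).comp_continuousOn hec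
  have hcont : ContinuousOn h' (Set.Icc t₀ t₁) := by
    apply ContinuousOn.add
    · exact (cont_dot.comp_continuousOn
        ((hg.comp_continuousOn hARe).prodMk hARe)).neg
    · exact ((cont_dot.comp_continuousOn (his.prodMk hAIe)).neg).sub
        (cont_dot.comp_continuousOn (hvs.prodMk hjc))
  have hrhs : ContinuousOn
      (fun t => -(is t ⬝ᵥ AIᵀ *ᵥ e t) - vs t ⬝ᵥ jV t) (Set.Icc t₀ t₁) :=
    ((cont_dot.comp_continuousOn (his.prodMk hAIe)).neg).sub
      (cont_dot.comp_continuousOn (hvs.prodMk hjc))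
  have hint1 : IntervalIntegrable h' volume t₀ t₁ :=
    (hIcc ▸ hcont).intervalIntegrable
  have hint2 : IntervalIntegrable
      (fun t => -(is t ⬝ᵥ AIᵀ *ᵥ e t) - vs t ⬝ᵥ jV t) volume t₀ t₁ :=
    (hIcc ▸ hrhs).intervalIntegrable
  have heq : ∫ t in t₀..t₁, h' t =
      (VC (qC t₁) + VL (φL t₁)) - (VC (qC t₀) + VL (φL t₀)) :=
    intervalIntegral.integral_eq_sub_of_hasDerivAt
      (fun t ht' => key t (hIcc ▸ ht')) hint1
  rw [← heq]
  apply intervalIntegral.integral_mono_on ht hint1 hint2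
  intro t ht'
  have := hgacc (ARᵀ *ᵥ e t)
  simp only [hh']
  linarith
end

section
/- (Energy balance for circuit model 2.) Let A_C ∈ ℝ^{n×n_C}, A_R ∈ ℝ^{n×n_R}, A_L ∈ ℝ^{n×n_L}, A_V ∈ ℝ^{n×n_V}, A_I ∈ ℝ^{n×n_I} be real matrices. Let q : ℝ^{n_C} → ℝ^{n_C} and φ : ℝ^{n_L} → ℝ^{n_L} be bijections, let V_C, V_L be differentiable functions with ∇V_C = q⁻¹ and ∇V_L = φ⁻¹, and let g : ℝ^{n_R} → ℝ^{n_R} be continuous with ⟪g(u_R), u_R⟫ ≥ 0 for all u_R. Let i_s : [t₀,t₁] → ℝ^{n_I} and v_s : [t₀,t₁] → ℝ^{n_V} be continuous, and let e, j_C, q_C, φ_L, j_V be functions on [t₀,t₁], with q_C and φ_L differentiable and all functions continuous, satisfying for all t: A_C j_C(t) + A_R g(A_Rᵀ e(t)) + A_L φ⁻¹(φ_L(t)) + A_V j_V(t) + A_I i_s(t) = 0; A_Cᵀ e(t) − q⁻¹(q_C(t)) = 0; q̇_C(t) = j_C(t); φ̇_L(t) = A_Lᵀ e(t); and A_Vᵀ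 e(t) = v_s(t). Then with H(t) := V_C(q_C(t)) + V_L(φ_L(t)) one has H(t₁) − H(t₀) ≤ ∫_{t₀}^{t₁} ( −i_s(t)ᵀ A_Iᵀ e(t) − v_s(t)ᵀ j_V(t) ) dt. -/
open Matrix MeasureTheory

private lemma dot_cont {m : ℕ} {a b : ℝ → Fin m → ℝ} {S : Set ℝ}
    (ha : ContinuousOn a S) (hb : ContinuousOn b S) :
    ContinuousOn (fun t => a t ⬝ᵥ b t) S := by
  have h : Continuous fun p : (Fin m → ℝ) × (Fin m → ℝ) => p.1 ⬝ᵥ p.2 :=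
    continuous_fst.dotProduct continuous_snd
  exact h.comp_continuousOn (ha.prodMk hb)

private lemma mulVec_cont {k m : ℕ} (A : Matrix (Fin k) (Fin m) ℝ) {e : ℝ → Fin m → ℝ}
    {S : Set ℝ} (he : ContinuousOn e S) :
    ContinuousOn (fun t => A.mulVec (e t)) S :=
  (continuous_const.matrix_mulVec continuous_id).comp_continuousOn he

private lemma dot_trans {k m : ℕ} (A : Matrix (Fin k) (Fin m) ℝ) (v : Fin k → ℝ)
    (w : Fin m → ℝ) : A.transpose.mulVec v ⬝ᵥ w = v ⬝ᵥ A.mulVec w := by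
  rw [Matrix.dotProduct_mulVec, Matrix.mulVec_transpose]

/-- Energy balance for circuit model 2 (with capacitive currents `j_C`):
along any solution of the circuit equations, the Hamiltonian
`H = V_C(q_C) + V_L(φ_L)` satisfies
`H(t₁) − H(t₀) ≤ ∫ (−i_sᵀ A_Iᵀ e − v_sᵀ j_V)`. -/
theorem circuit_model2_energy_balance {n nC nR nL nV nI : ℕ}
    (AC : Matrix (Fin n) (Fin nC) ℝ) (AR : Matrix (Fin n) (Fin nR) ℝ)
    (AL : Matrix (Fin n) (Fin nL) ℝ) (AV : Matrix (Fin n) (Fin nV) ℝ)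
    (AI : Matrix (Fin n) (Fin nI) ℝ)
    (q : (Fin nC → ℝ) → (Fin nC → ℝ)) (φ : (Fin nL → ℝ) → (Fin nL → ℝ))
    (hq : Function.Bijective q) (hφ : Function.Bijective φ)
    (VC : (Fin nC → ℝ) → ℝ) (VL : (Fin nL → ℝ) → ℝ)
    (hVC : Differentiable ℝ VC) (hVL : Differentiable ℝ VL)
    (hVCgrad : ∀ qc w, fderiv ℝ VC qc w = Function.invFun q qc ⬝ᵥ w)
    (hVLgrad : ∀ φl w, fderiv ℝ VL φl w = Function.invFun φ φl ⬝ᵥ w)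
    (g : (Fin nR → ℝ) → (Fin nR → ℝ)) (hg : Continuous g)
    (hgacc : ∀ uR, 0 ≤ g uR ⬝ᵥ uR)
    (t₀ t₁ : ℝ) (ht : t₀ ≤ t₁)
    (is : ℝ → Fin nI → ℝ) (vs : ℝ → Fin nV → ℝ)
    (his : ContinuousOn is (Set.Icc t₀ t₁)) (hvs : ContinuousOn vs (Set.Icc t₀ t₁))
    (e : ℝ → Fin n → ℝ) (jC : ℝ → Fin nC → ℝ)
    (qC : ℝ → Fin nC → ℝ) (φL : ℝ → Fin nL → ℝ) (jV : ℝ → Fin nV → ℝ)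
    (qC' : ℝ → Fin nC → ℝ) (φL' : ℝ → Fin nL → ℝ)
    (hqC : ∀ t ∈ Set.Icc t₀ t₁, HasDerivAt qC (qC' t) t)
    (hφL : ∀ t ∈ Set.Icc t₀ t₁, HasDerivAt φL (φL' t) t)
    (he : ContinuousOn e (Set.Icc t₀ t₁))
    (hjC : ContinuousOn jC (Set.Icc t₀ t₁))
    (hqCc : ContinuousOn qC (Set.Icc t₀ t₁))
    (hφLc : ContinuousOn φL (Set.Icc t₀ t₁))
    (hjVc : ContinuousOn jV (Set.Icc t₀ t₁))
    (hKCL : ∀ t ∈ Set.Icc t₀ t₁,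
      AC.mulVec (jC t) + AR.mulVec (g (AR.transpose.mulVec (e t))) +
        AL.mulVec (Function.invFun φ (φL t)) + AV.mulVec (jV t) +
        AI.mulVec (is t) = 0)
    (hcharge : ∀ t ∈ Set.Icc t₀ t₁,
      AC.transpose.mulVec (e t) - Function.invFun q (qC t) = 0)
    (hqdot : ∀ t ∈ Set.Icc t₀ t₁, qC' t = jC t)
    (hflux : ∀ t ∈ Set.Icc t₀ t₁, φL' t = AL.transpose.mulVec (e t))
    (hvolt : ∀ t ∈ Set.Icc t₀ t₁, AV.transpose.mulVec (e t) = vs t) :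
    (VC (qC t₁) + VL (φL t₁)) - (VC (qC t₀) + VL (φL t₀)) ≤
      ∫ t in t₀..t₁,
        (-(is t ⬝ᵥ AI.transpose.mulVec (e t)) - vs t ⬝ᵥ jV t) := by

  set S := Set.Icc t₀ t₁ with hS
  set F : ℝ → ℝ := fun t => (-(is t ⬝ᵥ AI.transpose.mulVec (e t)) - vs t ⬝ᵥ jV t) with hF
  set G : ℝ → ℝ := fun t =>
      F t - g (AR.transpose.mulVec (e t)) ⬝ᵥ AR.transpose.mulVec (e t) with hG
  -- derivative of the Hamiltonian
  have hHderiv : ∀ t ∈ S, HasDerivAt (fun t => VC (qC t) + VL (φL t)) (G t) t := by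
    intro t ht'
    have h1 : HasDerivAt (fun t => VC (qC t)) (fderiv ℝ VC (qC t) (qC' t)) t :=
      ((hVC (qC t)).hasFDerivAt).comp_hasDerivAt t (hqC t ht')
    have h2 : HasDerivAt (fun t => VL (φL t)) (fderiv ℝ VL (φL t) (φL' t)) t :=
      ((hVL (φL t)).hasFDerivAt).comp_hasDerivAt t (hφL t ht')
    have hsum := h1.add h2
    have heq : fderiv ℝ VC (qC t) (qC' t) + fderiv ℝ VL (φL t) (φL' t) = G t := by
      rw [hVCgrad, hVLgrad, hqdot t ht', hflux t ht']
      have hc : Function.invFun q (qC t) = AC.transpose.mulVec (e t) := by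
        have := hcharge t ht'
        have := sub_eq_zero.mp this
        exact this.symm
      rw [hc]
      rw [dot_trans AC (e t) (jC t)]
      rw [Matrix.dotProduct_mulVec (Function.invFun φ (φL t)) ALᵀ (e t),
        Matrix.vecMul_transpose]
      rw [dotProduct_comm (AL.mulVec (Function.invFun φ (φL t))) (e t)]
      have hkcl := hKCL t ht'
      have hzero : e t ⬝ᵥ (AC.mulVec (jC t) + AR.mulVec (g (AR.transpose.mulVec (e t))) +
          AL.mulVec (Function.invFun φ (φL t)) + AV.mulVec (jV t) +
          AI.mulVec (is t)) = 0 := by rw [hkcl]; simp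
      rw [dotProduct_add, dotProduct_add, dotProduct_add,
        dotProduct_add] at hzero
      have e1 : e t ⬝ᵥ AR.mulVec (g (AR.transpose.mulVec (e t)))
          = g (AR.transpose.mulVec (e t)) ⬝ᵥ AR.transpose.mulVec (e t) := by
        rw [← dot_trans AR (e t), dotProduct_comm]
      have e2 : e t ⬝ᵥ AV.mulVec (jV t) = vs t ⬝ᵥ jV t := by
        rw [← dot_trans AV (e t), hvolt t ht']
      have e3 : e t ⬝ᵥ AI.mulVec (is t) = is t ⬝ᵥ AI.transpose.mulVec (e t) := by
        rw [← dot_trans AI (e t), dotProduct_comm]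
      rw [e1, e2, e3] at hzero
      simp only [hG, hF]
      linarith
    rw [← heq]
    exact hsum
  -- continuity of the integrands
  have hARe : ContinuousOn (fun t => AR.transpose.mulVec (e t)) S := mulVec_cont _ he
  have hAIe : ContinuousOn (fun t => AI.transpose.mulVec (e t)) S := mulVec_cont _ he
  have hFcont : ContinuousOn F S := by
    exact ((dot_cont his hAIe).neg).sub (dot_cont hvs hjVc)
  have hGcont : ContinuousOn G S := by
    exact hFcont.sub (dot_cont (hg.comp_continuousOn hARe) hARe)
  have huIcc : Set.uIcc t₀ t₁ = S := Set.uIcc_of_le ht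
  have hFint : IntervalIntegrable F volume t₀ t₁ := by
    apply ContinuousOn.intervalIntegrable; rwa [huIcc]
  have hGint : IntervalIntegrable G volume t₀ t₁ := by
    apply ContinuousOn.intervalIntegrable; rwa [huIcc]
  have hftc : ∫ t in t₀..t₁, G t
      = (VC (qC t₁) + VL (φL t₁)) - (VC (qC t₀) + VL (φL t₀)) := by
    apply intervalIntegral.integral_eq_sub_of_hasDerivAt
    · intro t ht'; exact hHderiv t (huIcc ▸ ht')
    · exact hGint
  rw [← hftc]
  apply intervalIntegral.integral_mono_on ht hGint hFint
  intro t ht'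
  simp only [hG]
  have := hgacc (AR.transpose.mulVec (e t))
  linarith
end

section
/- (Hamiltonian change of the condensed coupled PH-DAE.) Let E ∈ ℝ^{k×n}, Ĵ ∈ ℝ^{k×k}, B̄ ∈ ℝ^{k×m̄}, let z : ℝ^n → ℝ^k and r : ℝ^k → ℝ^k be continuous, let V ⊆ ℝ^k be a subspace on which Ĵ is skew-symmetric (vᵀĴw = −wᵀĴv for v,w ∈ V), and let H be continuously differentiable with ∇H(x) = Eᵀ z(x) whenever z(x) ∈ V. Let ū : [t, t+h] → ℝ^{m̄} be continuous and let x : [t, t+h] → ℝ^n be differentiable with z∘x continuous, satisfying d/dτ (E x(τ)) = Ĵ z(x(τ)) − r(z(x(τ))) + B̄ ū(τ) and z(x(τ)) ∈ V for all τ. Then H(x(t+h)) − H(x(t)) = ∫_t^{t+h} ( −z(x(τ))ᵀ r(z(x(τ))) + ū(τ)ᵀ B̄ᵀ z(x(τ)) ) dτ. -/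
open Matrix MeasureTheory

/-- Hamiltonian change of the condensed coupled PH-DAE
`d/dτ (E x) = Ĵ z(x) − r(z(x)) + B̄ ū` with `Ĵ` skew-symmetric on the invariant subspace `V`
and `∇H(x) = Eᵀ z(x)` on `z⁻¹(V)`:
`H(x(t+h)) − H(x(t)) = ∫ (−z(x)ᵀ r(z(x)) + ūᵀ B̄ᵀ z(x))`. -/
theorem condensed_phdae_hamiltonian_change {k n mb : ℕ}
    (E : Matrix (Fin k) (Fin n) ℝ) (Jh : Matrix (Fin k) (Fin k) ℝ)
    (Bb : Matrix (Fin k) (Fin mb) ℝ)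
    (z : (Fin n → ℝ) → (Fin k → ℝ)) (r : (Fin k → ℝ) → (Fin k → ℝ))
    (hz : Continuous z) (hr : Continuous r)
    (V : Submodule ℝ (Fin k → ℝ))
    (hJ : ∀ v ∈ V, ∀ w ∈ V, v ⬝ᵥ Jh.mulVec w = -(w ⬝ᵥ Jh.mulVec v))
    (H : (Fin n → ℝ) → ℝ) (hH : ContDiff ℝ 1 H)
    (hgrad : ∀ x, z x ∈ V → ∀ w, fderiv ℝ H x w = E.transpose.mulVec (z x) ⬝ᵥ w)
    (t h : ℝ) (hh : 0 ≤ h)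
    (ub : ℝ → Fin mb → ℝ) (hub : ContinuousOn ub (Set.Icc t (t + h)))
    (x : ℝ → Fin n → ℝ) (x' : ℝ → Fin n → ℝ)
    (hx : ∀ τ ∈ Set.Icc t (t + h), HasDerivAt x (x' τ) τ)
    (hzx : ContinuousOn (fun τ => z (x τ)) (Set.Icc t (t + h)))
    (hmem : ∀ τ ∈ Set.Icc t (t + h), z (x τ) ∈ V)
    (hode : ∀ τ ∈ Set.Icc t (t + h),
      E.mulVec (x' τ) = Jh.mulVec (z (x τ)) - r (z (x τ)) + Bb.mulVec (ub τ)) :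
    H (x (t + h)) - H (x t) =
      ∫ τ in t..(t + h),
        (-(z (x τ) ⬝ᵥ r (z (x τ))) + ub τ ⬝ᵥ Bb.transpose.mulVec (z (x τ))) := by
  have hle : t ≤ t + h := le_add_of_nonneg_right hh
  have huIcc : Set.uIcc t (t + h) = Set.Icc t (t + h) := Set.uIcc_of_le hle
  -- derivative of H ∘ x equals the integrand
  have hderiv : ∀ τ ∈ Set.uIcc t (t + h),
      HasDerivAt (fun s => H (x s))
        (-(z (x τ) ⬝ᵥ r (z (x τ))) + ub τ ⬝ᵥ Bb.transpose.mulVec (z (x τ))) τ := by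
    intro τ hτ
    rw [huIcc] at hτ
    have hd : HasDerivAt (fun s => H (x s)) (fderiv ℝ H (x τ) (x' τ)) τ :=
      ((hH.differentiable one_ne_zero (x τ)).hasFDerivAt).comp_hasDerivAt τ (hx τ hτ)
    have hzero : z (x τ) ⬝ᵥ Jh.mulVec (z (x τ)) = 0 := by
      have := hJ _ (hmem τ hτ) _ (hmem τ hτ)
      linarith
    have key : fderiv ℝ H (x τ) (x' τ)
        = -(z (x τ) ⬝ᵥ r (z (x τ))) + ub τ ⬝ᵥ Bb.transpose.mulVec (z (x τ)) := by
      rw [hgrad (x τ) (hmem τ hτ) (x' τ)]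
      have h1 : E.transpose.mulVec (z (x τ)) ⬝ᵥ x' τ = z (x τ) ⬝ᵥ E.mulVec (x' τ) := by
        rw [Matrix.mulVec_transpose, ← Matrix.dotProduct_mulVec]
      rw [h1, hode τ hτ, dotProduct_add, dotProduct_sub, hzero,
        Matrix.dotProduct_mulVec, ← Matrix.mulVec_transpose, dotProduct_comm,
        dotProduct_comm (Bb.transpose.mulVec (z (x τ))) (ub τ)]
      ring
    rw [← key]; exact hd
  -- integrability of the integrand
  have hcont : ContinuousOn
      (fun τ => -(z (x τ) ⬝ᵥ r (z (x τ))) + ub τ ⬝ᵥ Bb.transpose.mulVec (z (x τ)))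
      (Set.Icc t (t + h)) := by
    have hrz : ContinuousOn (fun τ => r (z (x τ))) (Set.Icc t (t + h)) :=
      hr.comp_continuousOn hzx
    have hBz : ContinuousOn (fun τ => Bb.transpose.mulVec (z (x τ))) (Set.Icc t (t + h)) :=
      (Bb.transpose.mulVecLin.continuous_of_finiteDimensional).comp_continuousOn hzx
    apply ContinuousOn.add
    · apply ContinuousOn.neg
      simp only [dotProduct]
      exact continuousOn_finset_sum _ fun i _ =>
        ((continuous_apply i).comp_continuousOn hzx).mul
          ((continuous_apply i).comp_continuousOn hrz)
    · simp only [dotProduct]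
      exact continuousOn_finset_sum _ fun i _ =>
        ((continuous_apply i).comp_continuousOn hub).mul
          ((continuous_apply i).comp_continuousOn hBz)
  have hint : IntervalIntegrable
      (fun τ => -(z (x τ) ⬝ᵥ r (z (x τ))) + ub τ ⬝ᵥ Bb.transpose.mulVec (z (x τ)))
      volume t (t + h) := by
    apply ContinuousOn.intervalIntegrable
    rwa [huIcc]
  exact (intervalIntegral.integral_eq_sub_of_hasDerivAt hderiv hint).symm
end

section
/- (Kernel characterization underlying the index-one criterion for the first circuit model.) Let A_C ∈ ℝ^{n×n_C}, A_R ∈ ℝ^{n×n_R}, A_V ∈ ℝ^{n×n_V} be real matrices, let C ∈ ℝ^{n_C×n_C} be symmetric positive definite, let G ∈ ℝ^{n_R×n_R} satisfy that G + Gᵀ is positive definite, let Z_C be an injective matrix whose range equals ker(A_Cᵀ), and let Z_C' be an injective matrix whose range equals range(A_C). Consider the linear map Ẽ sending (x₁, x₂, x₃, x₄) ∈ ℝ^{n_C} × ℝ^{n_L} × ℝ^{n} × ℝ^{n_V} to ( −Z_Cᵀ A_R G A_Rᵀ x₃ − Z_Cᵀ A_V x₄, −(Z_C')ᵀ A_C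 C A_Cᵀ x₃, x₂, C⁻¹ x₁ + A_Cᵀ x₃, A_Vᵀ x₃ ). Then Ẽ is injective if and only if both ker( (A_C A_R A_V)ᵀ ) = {0} (i.e. the horizontally concatenated matrix (A_C A_R A_V) has full row rank) and ker(Z_Cᵀ A_V) = {0}. -/
open Matrix

private lemma dot_mulVec_flip {a b : ℕ} (M : Matrix (Fin a) (Fin b) ℝ)
    (x : Fin a → ℝ) (y : Fin b → ℝ) :
    x ⬝ᵥ M *ᵥ y = (Mᵀ *ᵥ x) ⬝ᵥ y := by
  rw [dotProduct_mulVec, mulVec_transpose]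

private lemma dot_mulVec_flip' {a b : ℕ} (M : Matrix (Fin a) (Fin b) ℝ)
    (x : Fin b → ℝ) (y : Fin a → ℝ) :
    x ⬝ᵥ Mᵀ *ᵥ y = (M *ᵥ x) ⬝ᵥ y := by
  rw [dotProduct_mulVec, vecMul_transpose]

/-- Kernel characterization underlying the index-one criterion for the first
circuit model.  The linear map `Ẽ` (the coefficient matrix of the derivative array) is
injective if and only if `(A_C A_R A_V)` has full row rank and `ker (Z_Cᵀ A_V) = {0}`. -/
theorem index_one_kernel_characterization {n nC nR nL nV p p' : ℕ}
    (AC : Matrix (Fin n) (Fin nC) ℝ) (AR : Matrix (Fin n) (Fin nR) ℝ)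
    (AV : Matrix (Fin n) (Fin nV) ℝ)
    (C : Matrix (Fin nC) (Fin nC) ℝ) (G : Matrix (Fin nR) (Fin nR) ℝ)
    (hCsymm : C.transpose = C)
    (hCpos : ∀ x : Fin nC → ℝ, x ≠ 0 → 0 < x ⬝ᵥ C.mulVec x)
    (hGpos : ∀ x : Fin nR → ℝ, x ≠ 0 → 0 < x ⬝ᵥ (G + G.transpose).mulVec x)
    (ZC : Matrix (Fin n) (Fin p) ℝ) (ZC' : Matrix (Fin n) (Fin p') ℝ)
    (hZCinj : Function.Injective ZC.mulVecLin)
    (hZCrange : LinearMap.range ZC.mulVecLin = LinearMap.ker AC.transpose.mulVecLin)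
    (hZC'inj : Function.Injective ZC'.mulVecLin)
    (hZC'range : LinearMap.range ZC'.mulVecLin = LinearMap.range AC.mulVecLin) :
    Function.Injective
      (fun x : (Fin nC → ℝ) × (Fin nL → ℝ) × (Fin n → ℝ) × (Fin nV → ℝ) =>
        (-(ZC.transpose * AR * G * AR.transpose).mulVec x.2.2.1 -
            (ZC.transpose * AV).mulVec x.2.2.2,
         -((ZC'.transpose * AC * C * AC.transpose).mulVec x.2.2.1),
         x.2.1,
         C⁻¹.mulVec x.1 + AC.transpose.mulVec x.2.2.1,
         AV.transpose.mulVec x.2.2.1)) ↔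
      ((∀ y : Fin n → ℝ, AC.transpose.mulVec y = 0 → AR.transpose.mulVec y = 0 →
          AV.transpose.mulVec y = 0 → y = 0) ∧
        ∀ w : Fin nV → ℝ, (ZC.transpose * AV).mulVec w = 0 → w = 0) := by
  -- C is invertible
  have hCmvinj : Function.Injective C.mulVec := by
    intro x y hxy
    by_contra hne
    have hsub : C *ᵥ (x - y) = 0 := by
      rw [Matrix.mulVec_sub, hxy, sub_self]
    have := hCpos (x - y) (sub_ne_zero.mpr hne)
    rw [hsub] at this
    simp at this
  have hCdet : IsUnit C.det :=
    (Matrix.isUnit_iff_isUnit_det C).mp (Matrix.mulVec_injective_iff_isUnit.mp hCmvinj)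
  constructor
  · -- injective → the two kernel conditions
    intro hinj
    constructor
    · intro y h1 h2 h3
      have h : ((0 : Fin nC → ℝ), (0 : Fin nL → ℝ), y, (0 : Fin nV → ℝ))
          = ((0 : Fin nC → ℝ), (0 : Fin nL → ℝ), (0 : Fin n → ℝ), (0 : Fin nV → ℝ)) := by
        apply hinj
        simp only [← Matrix.mulVec_mulVec, h1, h2, h3, Matrix.mulVec_zero, neg_zero,
          sub_zero, add_zero, sub_self]
      rw [Prod.mk.injEq, Prod.mk.injEq, Prod.mk.injEq] at h
      exact h.2.2.1
    · intro w hw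
      have h : ((0 : Fin nC → ℝ), (0 : Fin nL → ℝ), (0 : Fin n → ℝ), w)
          = ((0 : Fin nC → ℝ), (0 : Fin nL → ℝ), (0 : Fin n → ℝ), (0 : Fin nV → ℝ)) := by
        apply hinj
        simp only [hw, Matrix.mulVec_zero, neg_zero, sub_zero, add_zero, sub_self, zero_sub]
      rw [Prod.mk.injEq, Prod.mk.injEq, Prod.mk.injEq] at h
      exact h.2.2.2
  · -- the two kernel conditions → injective
    rintro ⟨hfull, hker⟩
    rintro ⟨a1, a2, a3, a4⟩ ⟨b1, b2, b3, b4⟩ hab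
    simp only [Prod.mk.injEq] at hab
    obtain ⟨e1, e2, e3, e4, e5⟩ := hab
    -- pass to differences
    set x1 := a1 - b1 with hx1
    set x3 := a3 - b3 with hx3
    set x4 := a4 - b4 with hx4
    have h1 : (ZCᵀ * AR * G * ARᵀ) *ᵥ x3 + (ZCᵀ * AV) *ᵥ x4 = 0 := by
      rw [hx3, hx4]
      simp only [Matrix.mulVec_sub]
      rw [sub_add_sub_comm, sub_eq_zero]
      rw [sub_eq_add_neg, ← neg_add, sub_eq_add_neg, ← neg_add, neg_inj] at e1
      exact e1
    have h2 : (ZC'ᵀ * AC * C * ACᵀ) *ᵥ x3 = 0 := by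
      rw [neg_inj] at e2
      rw [hx3]
      simp only [Matrix.mulVec_sub, sub_eq_zero]
      exact e2
    have h4 : C⁻¹ *ᵥ x1 + ACᵀ *ᵥ x3 = 0 := by
      rw [hx1, hx3]
      simp only [Matrix.mulVec_sub]
      rw [sub_add_sub_comm, sub_eq_zero]
      exact e4
    have h5 : AVᵀ *ᵥ x3 = 0 := by
      rw [hx3]
      simp only [Matrix.mulVec_sub, sub_eq_zero]
      exact e5
    -- Step A: A_Cᵀ x3 = 0
    have hAC3 : ACᵀ *ᵥ x3 = 0 := by
      set v : Fin n → ℝ := (AC * C * ACᵀ) *ᵥ x3 with hv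
      have hvmem : v ∈ LinearMap.range ZC'.mulVecLin := by
        rw [hZC'range]
        exact ⟨(C * ACᵀ) *ᵥ x3, by simp [Matrix.mulVecLin_apply, Matrix.mulVec_mulVec, hv,
          Matrix.mul_assoc]⟩
      obtain ⟨u, hu⟩ := hvmem
      rw [Matrix.mulVecLin_apply] at hu
      have hZv : ZC'ᵀ *ᵥ v = 0 := by
        rw [hv, Matrix.mulVec_mulVec, ← Matrix.mul_assoc, ← Matrix.mul_assoc]
        exact h2
      have huu : (ZC' *ᵥ u) ⬝ᵥ v = 0 := by
        rw [← dot_mulVec_flip', hZv, dotProduct_zero]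
      rw [hu] at huu
      have hv0 : v = 0 := dotProduct_self_eq_zero.mp huu
      -- now x3 ⬝ v = (ACᵀ x3) ⬝ C (ACᵀ x3) = 0
      have hquad : (ACᵀ *ᵥ x3) ⬝ᵥ C *ᵥ (ACᵀ *ᵥ x3) = 0 := by
        have : x3 ⬝ᵥ v = 0 := by rw [hv0, dotProduct_zero]
        rw [hv, ← Matrix.mulVec_mulVec, ← Matrix.mulVec_mulVec,
          dot_mulVec_flip AC x3] at this
        exact this
      by_contra hne
      exact absurd hquad (ne_of_gt (hCpos _ hne))
    -- x1 = 0
    have hx10 : x1 = 0 := by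
      have hC1 : C⁻¹ *ᵥ x1 = 0 := by
        rw [hAC3, add_zero] at h4; exact h4
      calc x1 = (C * C⁻¹) *ᵥ x1 := by rw [Matrix.mul_nonsing_inv C hCdet, Matrix.one_mulVec]
        _ = C *ᵥ (C⁻¹ *ᵥ x1) := (Matrix.mulVec_mulVec x1 C C⁻¹).symm
        _ = 0 := by rw [hC1, Matrix.mulVec_zero]
    -- x3 ∈ range ZC
    have hx3mem : x3 ∈ LinearMap.range ZC.mulVecLin := by
      rw [hZCrange]
      exact LinearMap.mem_ker.mpr hAC3
    obtain ⟨z, hz⟩ := hx3mem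
    rw [Matrix.mulVecLin_apply] at hz
    -- Step D: A_Rᵀ x3 = 0
    have hARq : (ARᵀ *ᵥ x3) ⬝ᵥ G *ᵥ (ARᵀ *ᵥ x3) = 0 := by
      have hd : z ⬝ᵥ ((ZCᵀ * AR * G * ARᵀ) *ᵥ x3) + z ⬝ᵥ ((ZCᵀ * AV) *ᵥ x4) = 0 := by
        rw [← dotProduct_add, h1, dotProduct_zero]
      have ht1 : z ⬝ᵥ ((ZCᵀ * AR * G * ARᵀ) *ᵥ x3)
          = (ARᵀ *ᵥ x3) ⬝ᵥ G *ᵥ (ARᵀ *ᵥ x3) := by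
        rw [show ZCᵀ * AR * G * ARᵀ = ZCᵀ * (AR * (G * ARᵀ)) by rw [Matrix.mul_assoc, Matrix.mul_assoc],
          ← Matrix.mulVec_mulVec, dot_mulVec_flip' ZC, hz,
          ← Matrix.mulVec_mulVec, dot_mulVec_flip AR, ← Matrix.mulVec_mulVec]
      have ht2 : z ⬝ᵥ ((ZCᵀ * AV) *ᵥ x4) = 0 := by
        rw [← Matrix.mulVec_mulVec, dot_mulVec_flip' ZC, hz, dot_mulVec_flip AV, h5,
          zero_dotProduct]
      rw [ht1, ht2, add_zero] at hd
      exact hd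
    have hAR3 : ARᵀ *ᵥ x3 = 0 := by
      by_contra hne
      have hpos := hGpos _ hne
      have : (ARᵀ *ᵥ x3) ⬝ᵥ (G + Gᵀ) *ᵥ (ARᵀ *ᵥ x3) = 0 := by
        rw [Matrix.add_mulVec, dotProduct_add, hARq, zero_add, dot_mulVec_flip' G,
          dotProduct_comm, hARq]
      exact absurd this (ne_of_gt hpos)
    -- x3 = 0 and x4 = 0
    have hx30 : x3 = 0 := hfull x3 hAC3 hAR3 h5
    have hx40 : x4 = 0 := by
      apply hker
      rw [hx30, Matrix.mulVec_zero, zero_add] at h1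
      exact h1
    -- conclude
    have : a1 = b1 := sub_eq_zero.mp hx10
    have : a3 = b3 := sub_eq_zero.mp hx30
    have : a4 = b4 := sub_eq_zero.mp hx40
    simp only [Prod.mk.injEq]
    exact ⟨sub_eq_zero.mp hx10, e3, sub_eq_zero.mp hx30, sub_eq_zero.mp hx40⟩
end

section
/- (Hamiltonian change in the Jacobi-type dynamic iteration.) Let E ∈ ℝ^{k×n}, J ∈ ℝ^{k×k}, B̄ ∈ ℝ^{k×m̄}, and S ∈ ℝ^{k×k} skew-symmetric (in the application S = B̂ Ĉ B̂ᵀ, where Ĉ is the interconnection matrix and B̂ the coupling port matrix, and only the Schur complement S is required to be skew-symmetric). Let z : ℝ^n → ℝ^k and r : ℝ^k → ℝ^k be continuous, let V ⊆ ℝ^k be a subspace on which J is skew-symmetric, and let H be continuously differentiable with ∇H(x) = Eᵀ z(x) whenever z(x) ∈ V. Let z_old : [t, t+h] → ℝ^k (the effort of the previous iterate) and ū : [t, t+h] → ℝ^{m̄} be continuous, and let x : [t, t+h] → ℝ^n be differentiable with z∘x continuous, satisfying z(x(τ)) ∈ V and d/dτ (E x(τ)) = (J − S) z(x(τ)) −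 r(z(x(τ))) + S ( z(x(τ)) − z_old(τ) ) + B̄ ū(τ) for all τ. Then H(x(t+h)) − H(x(t)) = ∫_t^{t+h} ( −z(x(τ))ᵀ r(z(x(τ))) + ū(τ)ᵀ B̄ᵀ z(x(τ)) − ( z(x(τ)) − z_old(τ) )ᵀ S z_old(τ) ) dτ. -/
open Matrix MeasureTheory

private lemma skew_self {k : ℕ} (S : Matrix (Fin k) (Fin k) ℝ) (hS : S.transpose = -S)
    (v : Fin k → ℝ) : v ⬝ᵥ S.mulVec v = 0 := by
  have h1 : v ⬝ᵥ S.mulVec v = S.transpose.mulVec v ⬝ᵥ v := by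
    rw [Matrix.mulVec_transpose, ← Matrix.dotProduct_mulVec]
  rw [hS, Matrix.neg_mulVec, neg_dotProduct] at h1
  rw [dotProduct_comm] at h1 ⊢
  linarith

private lemma contOn_dotP {k : ℕ} {s : Set ℝ} {f g : ℝ → Fin k → ℝ}
    (hf : ContinuousOn f s) (hg : ContinuousOn g s) :
    ContinuousOn (fun τ => f τ ⬝ᵥ g τ) s := by
  simp only [dotProduct]
  exact continuousOn_finset_sum _ fun i _ =>
    (((continuous_apply i).comp_continuousOn hf).mul ((continuous_apply i).comp_continuousOn hg))

/-- Hamiltonian change in the Jacobi-type dynamic iteration.  With skew-symmetric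
Schur complement `S = B̂ Ĉ B̂ᵀ`, along a solution of
`d/dτ (E x) = (J − S) z(x) − r(z(x)) + S (z(x) − z_old) + B̄ ū` one has
`H(x(t+h)) − H(x(t)) = ∫ (−z(x)ᵀ r(z(x)) + ūᵀ B̄ᵀ z(x) − (z(x) − z_old)ᵀ S z_old)`. -/
theorem jacobi_iteration_hamiltonian_change {k n mb : ℕ}
    (E : Matrix (Fin k) (Fin n) ℝ) (J : Matrix (Fin k) (Fin k) ℝ)
    (Bb : Matrix (Fin k) (Fin mb) ℝ)
    (S : Matrix (Fin k) (Fin k) ℝ) (hS : S.transpose = -S)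
    (z : (Fin n → ℝ) → (Fin k → ℝ)) (r : (Fin k → ℝ) → (Fin k → ℝ))
    (hz : Continuous z) (hr : Continuous r)
    (V : Submodule ℝ (Fin k → ℝ))
    (hJ : ∀ v ∈ V, ∀ w ∈ V, v ⬝ᵥ J.mulVec w = -(w ⬝ᵥ J.mulVec v))
    (H : (Fin n → ℝ) → ℝ) (hH : ContDiff ℝ 1 H)
    (hgrad : ∀ x, z x ∈ V → ∀ w, fderiv ℝ H x w = E.transpose.mulVec (z x) ⬝ᵥ w)
    (t h : ℝ) (hh : 0 ≤ h)
    (zold : ℝ → Fin k → ℝ) (hzold : ContinuousOn zold (Set.Icc t (t + h)))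
    (ub : ℝ → Fin mb → ℝ) (hub : ContinuousOn ub (Set.Icc t (t + h)))
    (x : ℝ → Fin n → ℝ) (x' : ℝ → Fin n → ℝ)
    (hx : ∀ τ ∈ Set.Icc t (t + h), HasDerivAt x (x' τ) τ)
    (hzx : ContinuousOn (fun τ => z (x τ)) (Set.Icc t (t + h)))
    (hmem : ∀ τ ∈ Set.Icc t (t + h), z (x τ) ∈ V)
    (hode : ∀ τ ∈ Set.Icc t (t + h),
      E.mulVec (x' τ) = (J - S).mulVec (z (x τ)) - r (z (x τ)) +
        S.mulVec (z (x τ) - zold τ) + Bb.mulVec (ub τ)) :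
    H (x (t + h)) - H (x t) =
      ∫ τ in t..(t + h),
        (-(z (x τ) ⬝ᵥ r (z (x τ))) + ub τ ⬝ᵥ Bb.transpose.mulVec (z (x τ)) -
          (z (x τ) - zold τ) ⬝ᵥ S.mulVec (zold τ)) := by
  have hle : t ≤ t + h := le_add_of_nonneg_right hh
  have huIcc : Set.uIcc t (t + h) = Set.Icc t (t + h) := Set.uIcc_of_le hle
  -- derivative of H ∘ x
  have hderiv : ∀ τ ∈ Set.uIcc t (t + h),
      HasDerivAt (fun s => H (x s))
        (-(z (x τ) ⬝ᵥ r (z (x τ))) + ub τ ⬝ᵥ Bb.transpose.mulVec (z (x τ)) -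
          (z (x τ) - zold τ) ⬝ᵥ S.mulVec (zold τ)) τ := by
    intro τ hτ
    rw [huIcc] at hτ
    have hd : HasDerivAt (fun s => H (x s)) (fderiv ℝ H (x τ) (x' τ)) τ :=
      ((hH.differentiable one_ne_zero (x τ)).hasFDerivAt).comp_hasDerivAt τ (hx τ hτ)
    have key : fderiv ℝ H (x τ) (x' τ) =
        -(z (x τ) ⬝ᵥ r (z (x τ))) + ub τ ⬝ᵥ Bb.transpose.mulVec (z (x τ)) -
          (z (x τ) - zold τ) ⬝ᵥ S.mulVec (zold τ) := by
      rw [hgrad (x τ) (hmem τ hτ) (x' τ)]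
      have h1 : E.transpose.mulVec (z (x τ)) ⬝ᵥ x' τ = z (x τ) ⬝ᵥ E.mulVec (x' τ) := by
        rw [Matrix.mulVec_transpose, ← Matrix.dotProduct_mulVec]
      rw [h1, hode τ hτ]
      set zz := z (x τ)
      set zo := zold τ
      have hJz : zz ⬝ᵥ J.mulVec zz = 0 := by
        have := hJ zz (hmem τ hτ) zz (hmem τ hτ); linarith
      have hSz : zz ⬝ᵥ S.mulVec zz = 0 := skew_self S hS zz
      have hSo : zo ⬝ᵥ S.mulVec zo = 0 := skew_self S hS zo
      have hB : ub τ ⬝ᵥ Bb.transpose.mulVec zz = zz ⬝ᵥ Bb.mulVec (ub τ) := by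
        rw [Matrix.mulVec_transpose, Matrix.dotProduct_mulVec, dotProduct_comm]
      rw [hB]
      simp only [Matrix.sub_mulVec, Matrix.mulVec_sub, dotProduct_add,
        dotProduct_sub, sub_dotProduct]
      linarith
    rwa [key] at hd
  -- integrability
  have hcont : ContinuousOn (fun τ =>
      -(z (x τ) ⬝ᵥ r (z (x τ))) + ub τ ⬝ᵥ Bb.transpose.mulVec (z (x τ)) -
        (z (x τ) - zold τ) ⬝ᵥ S.mulVec (zold τ)) (Set.Icc t (t + h)) := by
    apply ContinuousOn.sub
    · apply ContinuousOn.add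
      · exact (contOn_dotP hzx (hr.comp_continuousOn hzx)).neg
      · exact contOn_dotP hub
          ((continuous_const.matrix_mulVec continuous_id).comp_continuousOn hzx)
    · exact contOn_dotP (hzx.sub hzold)
        ((continuous_const.matrix_mulVec continuous_id).comp_continuousOn hzold)
  have hint := (hcont.mono huIcc.subset).intervalIntegrable (μ := volume)
  exact (intervalIntegral.integral_eq_sub_of_hasDerivAt hderiv hint).symm
end

section
/- (Energy balance for multiply coupled circuit DAEs.) Let N ≥ 2 and for each i ∈ {1,…,N} let A_{C_i}, A_{R_i}, A_{L_i}, A_{V_i}, A_{I_i} and A_{λ_i} ∈ ℝ^{n_i×n_λ} be real matrices (the last being the incidence matrix of the n_λ coupling branches in subcircuit i). Let q_i, φ_i be bijections with differentiable potentials V_{C_i}, V_{L_i} satisfying ∇V_{C_i} = q_i⁻¹ and ∇V_{L_i} = φ_i⁻¹, and let g_i be continuous with ⟪g_i(u), u⟫ ≥ 0 for all u. Let i_{s,i}, v_{s,i} be continuous source functions on [t₀,t₁], and suppose differentiable functions e_i, j_{L_i}, j_{V_i} and a continuous function λ : [t₀,t₁] → ℝ^{n_λ} satisfy for all t and all i: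 A_{C_i} d/dt q_i(A_{C_i}ᵀ e_i) + A_{R_i} g_i(A_{R_i}ᵀ e_i) + A_{L_i} j_{L_i} + A_{V_i} j_{V_i} + A_{I_i} i_{s,i}(t) + A_{λ_i} λ(t) = 0; d/dt φ_i(j_{L_i}) = A_{L_i}ᵀ e_i; A_{V_i}ᵀ e_i = v_{s,i}(t); together with the coupling condition Σ_{i=1}^N A_{λ_i}ᵀ e_i(t) = 0. Then the total Hamiltonian H(t) := Σ_i ( V_{C_i}(q_i(A_{C_i}ᵀ e_i(t))) + V_{L_i}(φ_i(j_{L_i}(t))) ) satisfies H(t₁) − H(t₀) ≤ ∫_{t₀}^{t₁} Σ_{i=1}^N ( −i_{s,i}(t)ᵀ A_{I_i}ᵀ e_i(t) − v_{s,i}(t)ᵀ j_{V_i}(t) ) dt. -/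
open Matrix MeasureTheory

private lemma contOn_dot_s19 {m : ℕ} {s : Set ℝ} {u v : ℝ → Fin m → ℝ}
    (hu : ContinuousOn u s) (hv : ContinuousOn v s) :
    ContinuousOn (fun t => u t ⬝ᵥ v t) s := by
  simp only [dotProduct]
  exact continuousOn_finset_sum _ fun j _ =>
    ((continuous_apply j).comp_continuousOn hu).mul ((continuous_apply j).comp_continuousOn hv)

private lemma contOn_mulVec {m k : ℕ} {s : Set ℝ} (M : Matrix (Fin m) (Fin k) ℝ)
    {u : ℝ → Fin k → ℝ} (hu : ContinuousOn u s) :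
    ContinuousOn (fun t => M.mulVec (u t)) s := by
  rw [continuousOn_pi]
  intro j
  exact contOn_dot_s19 continuousOn_const hu

private lemma sum_dotProduct' {ι : Type*} (s : Finset ι) {m : ℕ}
    (f : ι → Fin m → ℝ) (v : Fin m → ℝ) :
    (∑ i ∈ s, f i) ⬝ᵥ v = ∑ i ∈ s, f i ⬝ᵥ v := by
  simp only [dotProduct, Finset.sum_apply, Finset.sum_mul]
  exact Finset.sum_comm

/-- Energy balance for `N ≥ 2` circuit DAEs coupled through `n_λ` coupling
branches with common coupling current `λ`: the total Hamiltonian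
`H = Σᵢ (V_{C_i}(q_i(A_{C_i}ᵀ e_i)) + V_{L_i}(φ_i(j_{L_i})))` satisfies
`H(t₁) − H(t₀) ≤ ∫ Σᵢ (−i_{s,i}ᵀ A_{I_i}ᵀ e_i − v_{s,i}ᵀ j_{V_i})`. -/
theorem coupled_circuits_energy_balance {N : ℕ} (hN : 2 ≤ N)
    (n nC nR nL nV nI : Fin N → ℕ) (nlam : ℕ)
    (AC : ∀ i, Matrix (Fin (n i)) (Fin (nC i)) ℝ)
    (AR : ∀ i, Matrix (Fin (n i)) (Fin (nR i)) ℝ)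
    (AL : ∀ i, Matrix (Fin (n i)) (Fin (nL i)) ℝ)
    (AV : ∀ i, Matrix (Fin (n i)) (Fin (nV i)) ℝ)
    (AI : ∀ i, Matrix (Fin (n i)) (Fin (nI i)) ℝ)
    (Alam : ∀ i, Matrix (Fin (n i)) (Fin nlam) ℝ)
    (q : ∀ i, (Fin (nC i) → ℝ) → (Fin (nC i) → ℝ))
    (φ : ∀ i, (Fin (nL i) → ℝ) → (Fin (nL i) → ℝ))
    (hq : ∀ i, Function.Bijective (q i)) (hφ : ∀ i, Function.Bijective (φ i))
    (VC : ∀ i, (Fin (nC i) → ℝ) → ℝ) (VL : ∀ i, (Fin (nL i) → ℝ) → ℝ)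
    (hVC : ∀ i, Differentiable ℝ (VC i)) (hVL : ∀ i, Differentiable ℝ (VL i))
    (hVCgrad : ∀ i qc w, fderiv ℝ (VC i) qc w = Function.invFun (q i) qc ⬝ᵥ w)
    (hVLgrad : ∀ i φl w, fderiv ℝ (VL i) φl w = Function.invFun (φ i) φl ⬝ᵥ w)
    (g : ∀ i, (Fin (nR i) → ℝ) → (Fin (nR i) → ℝ))
    (hg : ∀ i, Continuous (g i)) (hgacc : ∀ i u, 0 ≤ g i u ⬝ᵥ u)
    (t₀ t₁ : ℝ) (ht : t₀ ≤ t₁)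
    (is : ∀ i, ℝ → Fin (nI i) → ℝ) (vs : ∀ i, ℝ → Fin (nV i) → ℝ)
    (his : ∀ i, ContinuousOn (is i) (Set.Icc t₀ t₁))
    (hvs : ∀ i, ContinuousOn (vs i) (Set.Icc t₀ t₁))
    (e : ∀ i, ℝ → Fin (n i) → ℝ) (jL : ∀ i, ℝ → Fin (nL i) → ℝ)
    (jV : ∀ i, ℝ → Fin (nV i) → ℝ) (lam : ℝ → Fin nlam → ℝ)
    (he : ∀ i, ∀ t ∈ Set.Icc t₀ t₁, DifferentiableAt ℝ (e i) t)
    (hjL : ∀ i, ∀ t ∈ Set.Icc t₀ t₁, DifferentiableAt ℝ (jL i) t)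
    (hjV : ∀ i, ∀ t ∈ Set.Icc t₀ t₁, DifferentiableAt ℝ (jV i) t)
    (hlam : ContinuousOn lam (Set.Icc t₀ t₁))
    (w : ∀ i, ℝ → Fin (nC i) → ℝ) (v : ∀ i, ℝ → Fin (nL i) → ℝ)
    (hw : ∀ i, ∀ t ∈ Set.Icc t₀ t₁,
      HasDerivAt (fun s => q i ((AC i).transpose.mulVec (e i s))) (w i t) t)
    (hv : ∀ i, ∀ t ∈ Set.Icc t₀ t₁,
      HasDerivAt (fun s => φ i (jL i s)) (v i t) t)
    (hKCL : ∀ i, ∀ t ∈ Set.Icc t₀ t₁,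
      (AC i).mulVec (w i t) + (AR i).mulVec (g i ((AR i).transpose.mulVec (e i t))) +
        (AL i).mulVec (jL i t) + (AV i).mulVec (jV i t) + (AI i).mulVec (is i t) +
        (Alam i).mulVec (lam t) = 0)
    (hflux : ∀ i, ∀ t ∈ Set.Icc t₀ t₁, v i t = (AL i).transpose.mulVec (e i t))
    (hvolt : ∀ i, ∀ t ∈ Set.Icc t₀ t₁, (AV i).transpose.mulVec (e i t) = vs i t)
    (hcouple : ∀ t ∈ Set.Icc t₀ t₁, ∑ i, (Alam i).transpose.mulVec (e i t) = 0) :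
    (∑ i, (VC i (q i ((AC i).transpose.mulVec (e i t₁))) + VL i (φ i (jL i t₁)))) -
      (∑ i, (VC i (q i ((AC i).transpose.mulVec (e i t₀))) + VL i (φ i (jL i t₀)))) ≤
      ∫ t in t₀..t₁, ∑ i,
        (-(is i t ⬝ᵥ (AI i).transpose.mulVec (e i t)) - vs i t ⬝ᵥ jV i t) := by
  have hq' : ∀ i x, Function.invFun (q i) (q i x) = x := fun i x =>
    Function.leftInverse_invFun (hq i).injective x
  have hφ' : ∀ i x, Function.invFun (φ i) (φ i x) = x := fun i x =>
    Function.leftInverse_invFun (hφ i).injective x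
  set F : ℝ → ℝ := fun t => ∑ i,
      (-(g i ((AR i).transpose.mulVec (e i t)) ⬝ᵥ (AR i).transpose.mulVec (e i t)) +
        (-(is i t ⬝ᵥ (AI i).transpose.mulVec (e i t)) - vs i t ⬝ᵥ jV i t)) with hF
  set f : ℝ → ℝ := fun t => ∑ i,
      (-(is i t ⬝ᵥ (AI i).transpose.mulVec (e i t)) - vs i t ⬝ᵥ jV i t) with hf
  -- continuity facts
  have hecont : ∀ i, ContinuousOn (e i) (Set.Icc t₀ t₁) :=
    fun i t ht' => ((he i t ht').continuousAt).continuousWithinAt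
  have hjVcont : ∀ i, ContinuousOn (jV i) (Set.Icc t₀ t₁) :=
    fun i t ht' => ((hjV i t ht').continuousAt).continuousWithinAt
  have hfcont : ContinuousOn f (Set.Icc t₀ t₁) := by
    apply continuousOn_finset_sum
    intro i _
    exact ((contOn_dot_s19 (his i) (contOn_mulVec _ (hecont i))).neg).sub
      (contOn_dot_s19 (hvs i) (hjVcont i))
  have hFcont : ContinuousOn F (Set.Icc t₀ t₁) := by
    apply continuousOn_finset_sum
    intro i _
    have hu : ContinuousOn (fun t => (AR i).transpose.mulVec (e i t)) (Set.Icc t₀ t₁) :=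
      contOn_mulVec _ (hecont i)
    exact ((contOn_dot_s19 ((hg i).comp_continuousOn hu) hu).neg).add
      (((contOn_dot_s19 (his i) (contOn_mulVec _ (hecont i))).neg).sub
        (contOn_dot_s19 (hvs i) (hjVcont i)))
  -- derivative of the Hamiltonian
  have hderiv : ∀ t ∈ Set.Icc t₀ t₁,
      HasDerivAt (fun s => ∑ i,
        (VC i (q i ((AC i).transpose.mulVec (e i s))) + VL i (φ i (jL i s)))) (F t) t := by
    intro t ht'
    have hsum : HasDerivAt (fun s => ∑ i,
        (VC i (q i ((AC i).transpose.mulVec (e i s))) + VL i (φ i (jL i s))))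
        (∑ i, ((AC i).transpose.mulVec (e i t) ⬝ᵥ w i t + jL i t ⬝ᵥ v i t)) t := by
      apply HasDerivAt.fun_sum
      intro i _
      have h1 : HasDerivAt (fun s => VC i (q i ((AC i).transpose.mulVec (e i s))))
          ((AC i).transpose.mulVec (e i t) ⬝ᵥ w i t) t := by
        have := ((hVC i (q i ((AC i).transpose.mulVec (e i t)))).hasFDerivAt).comp_hasDerivAt
          t (hw i t ht')
        have heq : fderiv ℝ (VC i) (q i ((AC i).transpose.mulVec (e i t))) (w i t)
            = (AC i).transpose.mulVec (e i t) ⬝ᵥ w i t := by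
          rw [hVCgrad, hq']
        rw [heq] at this
        exact this
      have h2 : HasDerivAt (fun s => VL i (φ i (jL i s))) (jL i t ⬝ᵥ v i t) t := by
        have := ((hVL i (φ i (jL i t))).hasFDerivAt).comp_hasDerivAt t (hv i t ht')
        have heq : fderiv ℝ (VL i) (φ i (jL i t)) (v i t) = jL i t ⬝ᵥ v i t := by
          rw [hVLgrad, hφ']
        rw [heq] at this
        exact this
      exact h1.add h2
    -- algebraic identity: the derivative equals F t
    have halg : ∑ i, ((AC i).transpose.mulVec (e i t) ⬝ᵥ w i t + jL i t ⬝ᵥ v i t) = F t := by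
      have hlamsum : ∑ i, e i t ⬝ᵥ (Alam i).mulVec (lam t) = 0 := by
        have h0 := hcouple t ht'
        calc ∑ i, e i t ⬝ᵥ (Alam i).mulVec (lam t)
            = ∑ i, ((Alam i).transpose.mulVec (e i t)) ⬝ᵥ lam t := by
              refine Finset.sum_congr rfl fun i _ => ?_
              rw [Matrix.mulVec_transpose, ← Matrix.dotProduct_mulVec]
          _ = (∑ i, (Alam i).transpose.mulVec (e i t)) ⬝ᵥ lam t :=
              (sum_dotProduct' _ _ _).symm
          _ = 0 := by rw [h0, zero_dotProduct]
      have hterm : ∀ i : Fin N,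
          (AC i).transpose.mulVec (e i t) ⬝ᵥ w i t + jL i t ⬝ᵥ v i t =
          (-(g i ((AR i).transpose.mulVec (e i t)) ⬝ᵥ (AR i).transpose.mulVec (e i t)) +
            (-(is i t ⬝ᵥ (AI i).transpose.mulVec (e i t)) - vs i t ⬝ᵥ jV i t)) -
          e i t ⬝ᵥ (Alam i).mulVec (lam t) := by
        intro i
        have hK := congrArg (fun z => e i t ⬝ᵥ z) (hKCL i t ht')
        simp only [dotProduct_add, dotProduct_zero] at hK
        have e1 : (AC i).transpose.mulVec (e i t) ⬝ᵥ w i t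
            = e i t ⬝ᵥ (AC i).mulVec (w i t) := by
          rw [Matrix.mulVec_transpose, Matrix.dotProduct_mulVec]
        have e2 : jL i t ⬝ᵥ v i t = e i t ⬝ᵥ (AL i).mulVec (jL i t) := by
          rw [hflux i t ht', Matrix.mulVec_transpose, Matrix.dotProduct_mulVec,
            dotProduct_comm]
        have e3 : e i t ⬝ᵥ (AR i).mulVec (g i ((AR i).transpose.mulVec (e i t)))
            = g i ((AR i).transpose.mulVec (e i t)) ⬝ᵥ (AR i).transpose.mulVec (e i t) := by
          rw [Matrix.dotProduct_mulVec, ← Matrix.mulVec_transpose, dotProduct_comm]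
        have e4 : e i t ⬝ᵥ (AV i).mulVec (jV i t) = vs i t ⬝ᵥ jV i t := by
          rw [Matrix.dotProduct_mulVec, ← Matrix.mulVec_transpose, hvolt i t ht']
        have e5 : e i t ⬝ᵥ (AI i).mulVec (is i t)
            = is i t ⬝ᵥ (AI i).transpose.mulVec (e i t) := by
          rw [Matrix.dotProduct_mulVec, ← Matrix.mulVec_transpose, dotProduct_comm]
        rw [e1, e2]
        rw [e3, e4, e5] at hK
        linarith
      rw [Finset.sum_congr rfl (fun i _ => hterm i), Finset.sum_sub_distrib, hlamsum,
        sub_zero, hF]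
    rw [← halg]
    exact hsum
  -- integrate
  have hFi : IntervalIntegrable F volume t₀ t₁ := by
    apply ContinuousOn.intervalIntegrable
    rwa [Set.uIcc_of_le ht]
  have hfi : IntervalIntegrable f volume t₀ t₁ := by
    apply ContinuousOn.intervalIntegrable
    rwa [Set.uIcc_of_le ht]
  have key : (∫ s in t₀..t₁, F s) =
      (∑ i, (VC i (q i ((AC i).transpose.mulVec (e i t₁))) + VL i (φ i (jL i t₁)))) -
      (∑ i, (VC i (q i ((AC i).transpose.mulVec (e i t₀))) + VL i (φ i (jL i t₀)))) := by
    apply intervalIntegral.integral_eq_sub_of_hasDerivAt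
    · intro x hx
      rw [Set.uIcc_of_le ht] at hx
      exact hderiv x hx
    · exact hFi
  rw [← key]
  apply intervalIntegral.integral_mono_on ht hFi hfi
  intro x hx
  apply Finset.sum_le_sum
  intro i _
  have := hgacc i ((AR i).transpose.mulVec (e i x))
  linarith
end
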